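/- arXiv:1408.3671 — 10 statements merged into one kernel-verified Lean document; each statement's English description precedes it below -/
import Mathlib

section
/- For all positive integers s and k, every finite family F of finite sets, each of cardinality at most s, with |F| ≥ (√10 − 2)² · (k/(√10 − 2))^s · s! contains a sunflower of cardinality k. -/
/-- A family `B` is a sunflower with some core `Y`: any two distinct members
intersect exactly in `Y`. -/
def IsSunflower {α : Type*} [DecidableEq α] (B : Finset (Finset α)) : Prop :=
  ∃ Y : Finset α, ∀ U ∈ B, ∀ V ∈ B, U ≠ V → U ∩ V = Y

namespace SunflowerAux

open Finset

noncomputable def RC : ℝ := Real.sqrt 10 - 2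

lemma sqrt10_sq : Real.sqrt 10 ^ 2 = 10 := Real.sq_sqrt (by norm_num)

lemma sqrt10_nonneg : 0 ≤ Real.sqrt 10 := Real.sqrt_nonneg 10

lemma sqrt10_lb : 3.162 < Real.sqrt 10 := by
  nlinarith [sqrt10_sq, sqrt10_nonneg]

lemma sqrt10_ub : Real.sqrt 10 < 3.163 := by
  nlinarith [sqrt10_sq, sqrt10_nonneg]

lemma RC_lb : 1.162 < RC := by unfold RC; linarith [sqrt10_lb]

lemma RC_ub : RC < 1.163 := by unfold RC; linarith [sqrt10_ub]

lemma RC_pos : 0 < RC := by linarith [RC_lb]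

lemma RC_sq : RC ^ 2 = 6 - 4 * RC := by
  unfold RC; nlinarith [sqrt10_sq]

noncomputable def TT (k n : ℕ) : ℝ := RC ^ 2 * ((k : ℝ) / RC) ^ n * (Nat.factorial n : ℝ)

lemma TT_pos (k n : ℕ) (hk : 0 < k) : 0 < TT k n := by
  have h1 : (0:ℝ) < (k : ℝ) / RC := by
    apply div_pos _ RC_pos
    exact_mod_cast hk
  have h2 : (0:ℝ) < (Nat.factorial n : ℝ) := by exact_mod_cast Nat.factorial_pos n
  exact mul_pos (mul_pos (pow_pos RC_pos 2) (pow_pos h1 n)) h2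

lemma TT_succ (k n : ℕ) : TT k (n+1) = ((k:ℝ) * ((n:ℝ)+1) / RC) * TT k n := by
  unfold TT
  rw [Nat.factorial_succ]
  push_cast
  have hRC := RC_pos.ne'
  field_simp
  linear_combination ((k:ℝ) * (k:ℝ) ^ n * RC⁻¹ ^ n) * (mul_inv_cancel₀ hRC)

lemma TT_one (k : ℕ) : TT k 1 = RC * k := by
  unfold TT
  have := RC_pos
  field_simp
  ring

lemma TT_ge (k n : ℕ) (hk : 2 ≤ k) : RC * k ≤ TT k (n+1) := by
  induction n with
  | zero => rw [TT_one]
  | succ n ih =>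
    rw [TT_succ]
    have hfac : (1:ℝ) ≤ (k:ℝ) * ((n:ℝ)+1+1) / RC := by
      rw [le_div_iff₀ RC_pos]
      have hk2 : (2:ℝ) ≤ (k:ℝ) := by exact_mod_cast hk
      nlinarith [RC_ub]
    have hpos : (0:ℝ) < TT k (n+1) := TT_pos k (n+1) (by omega)
    calc RC * k ≤ TT k (n+1) := ih
    _ = 1 * TT k (n+1) := by ring
    _ ≤ ((k:ℝ) * ((n:ℝ)+1+1) / RC) * TT k (n+1) := by
        apply mul_le_mul_of_nonneg_right hfac hpos.le
    _ = ((k:ℝ) * ((↑(n+1):ℝ)+1) / RC) * TT k (n+1) := by push_cast; ring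

lemma sunflower_of_disj {α : Type*} [DecidableEq α] {B : Finset (Finset α)}
    (h : ∀ U ∈ B, ∀ V ∈ B, U ≠ V → U ∩ V = ∅) : IsSunflower B := ⟨∅, h⟩

lemma no_k_disjoint {α : Type*} [DecidableEq α] {k : ℕ} {F B : Finset (Finset α)}
    (hfree : ¬ ∃ B ⊆ F, B.card = k ∧ IsSunflower B) (hBF : B ⊆ F)
    (hpd : ∀ U ∈ B, ∀ V ∈ B, U ≠ V → U ∩ V = ∅) : B.card < k := by
  by_contra h
  push_neg at h
  obtain ⟨B', hB'B, hB'card⟩ := Finset.exists_subset_card_eq h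
  exact hfree ⟨B', hB'B.trans hBF, hB'card,
    sunflower_of_disj (fun U hU V hV hne => hpd U (hB'B hU) V (hB'B hV) hne)⟩

/-- Lifting lemma: if `G` is obtained from a sunflower-free family `F` by
removing a fixed set `S` from members containing it, then `G` is sunflower-free. -/
lemma lift_free {α : Type*} [DecidableEq α] {k : ℕ} {F G : Finset (Finset α)} (S : Finset α)
    (hmem : ∀ V ∈ G, (∀ a ∈ S, a ∉ V) ∧ V ∪ S ∈ F)
    (hfree : ¬ ∃ B ⊆ F, B.card = k ∧ IsSunflower B) :
    ¬ ∃ B ⊆ G, B.card = k ∧ IsSunflower B := by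
  rintro ⟨B, hBG, hBcard, Y, hY⟩
  refine hfree ⟨B.image (· ∪ S), ?_, ?_, Y ∪ S, ?_⟩
  · intro W hW
    obtain ⟨V, hV, rfl⟩ := Finset.mem_image.mp hW
    exact (hmem V (hBG hV)).2
  · rw [Finset.card_image_of_injOn, hBcard]
    intro V hV W hW h
    have hVS := (hmem V (hBG hV)).1
    have hWS := (hmem W (hBG hW)).1
    have h' : V ∪ S = W ∪ S := h
    ext a
    constructor
    · intro haV
      have hmem2 : a ∈ W ∪ S := by rw [← h']; exact Finset.mem_union_left S haV
      rcases Finset.mem_union.mp hmem2 with h1 | h1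
      · exact h1
      · exact absurd haV (hVS a h1)
    · intro haW
      have hmem2 : a ∈ V ∪ S := by rw [h']; exact Finset.mem_union_left S haW
      rcases Finset.mem_union.mp hmem2 with h1 | h1
      · exact h1
      · exact absurd haW (hWS a h1)
  · intro U' hU' V' hV' hne
    obtain ⟨V, hV, rfl⟩ := Finset.mem_image.mp hU'
    obtain ⟨W, hW, rfl⟩ := Finset.mem_image.mp hV'
    have hVW : V ≠ W := fun h => hne (by rw [h])
    have hcore := hY V hV W hW hVW
    ext a
    simp only [Finset.mem_inter, Finset.mem_union, ← hcore]
    tauto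

/-- Double counting: incidences between points of `A` and members of `F`. -/
lemma sum_deg_eq {α : Type*} [DecidableEq α] (F : Finset (Finset α)) (A : Finset α) :
    ∑ x ∈ A, (F.filter (fun U => x ∈ U)).card = ∑ U ∈ F, (A ∩ U).card := by
  calc ∑ x ∈ A, (F.filter (fun U => x ∈ U)).card
      = ∑ x ∈ A, ∑ U ∈ F, if x ∈ U then 1 else 0 := by
        apply Finset.sum_congr rfl; intro x _; exact Finset.card_filter _ _
    _ = ∑ U ∈ F, ∑ x ∈ A, if x ∈ U then 1 else 0 := Finset.sum_comm
    _ = ∑ U ∈ F, (A ∩ U).card := by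
        apply Finset.sum_congr rfl; intro U _
        rw [← Finset.card_filter, Finset.filter_mem_eq_inter]

/-- Selection lemma: from a large set `G` of points covered by the disjoint family `D`,
one can select `X` of size at most `2r` whose excess over the number of
touched members of `D` is at least `r`. -/
lemma select {α : Type*} [DecidableEq α] :
    ∀ N : ℕ, ∀ D : Finset (Finset α), D.card ≤ N →
      (∀ U ∈ D, ∀ V ∈ D, U ≠ V → U ∩ V = ∅) →
      ∀ G : Finset α, (∀ x ∈ G, ∃ U ∈ D, x ∈ U) →
      ∀ r : ℕ, 1 ≤ r → D.card + r ≤ G.card →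
      ∃ X ⊆ G, X.card ≤ 2 * r ∧
        r + (D.filter (fun W => ∃ x ∈ X, x ∈ W)).card ≤ X.card := by
  intro N
  induction N with
  | zero =>
    intro D hDN hpd G hGD r hr hcard
    exfalso
    have hD : D = ∅ := Finset.card_eq_zero.mp (by omega)
    have hG : G = ∅ := by
      rw [Finset.eq_empty_iff_forall_notMem]
      intro x hx
      obtain ⟨U, hU, _⟩ := hGD x hx
      simp [hD] at hU
    rw [hG] at hcard
    simp at hcard
    omega
  | succ N ihN =>
    intro D hDN hpd G hGD r hr hcard
    classical
    -- find a member of D containing at least 2 points of G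
    have hex : ∃ W ∈ D, 2 ≤ (G ∩ W).card := by
      by_contra h
      push_neg at h
      have h1 : G.card ≤ ∑ W ∈ D, (G ∩ W).card := by
        have hsub : G ⊆ D.biUnion (fun W => G ∩ W) := by
          intro x hx
          obtain ⟨U, hU, hxU⟩ := hGD x hx
          exact Finset.mem_biUnion.mpr ⟨U, hU, Finset.mem_inter.mpr ⟨hx, hxU⟩⟩
        exact le_trans (Finset.card_le_card hsub) Finset.card_biUnion_le
      have h2 : ∑ W ∈ D, (G ∩ W).card ≤ D.card * 1 := by
        rw [← smul_eq_mul]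
        apply Finset.sum_le_card_nsmul
        intro W hW
        have := h W hW
        omega
      omega
    obtain ⟨W, hWD, hb⟩ := hex
    rcases le_or_gt (r+1) ((G ∩ W).card) with hbig | hsmall
    · -- one flower carries r+1 points
      obtain ⟨X, hXsub, hXcard⟩ := Finset.exists_subset_card_eq hbig
      refine ⟨X, hXsub.trans Finset.inter_subset_left, by omega, ?_⟩
      have hS : D.filter (fun W' => ∃ x ∈ X, x ∈ W') ⊆ {W} := by
        intro W' hW'
        rw [Finset.mem_singleton]
        obtain ⟨hW'D, x, hxX, hxW'⟩ := Finset.mem_filter.mp hW'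
        by_contra hne
        have hxW : x ∈ W := (Finset.mem_inter.mp (hXsub hxX)).2
        have := hpd W' hW'D W hWD hne
        exact absurd (Finset.mem_inter.mpr ⟨hxW', hxW⟩)
          (by rw [this]; exact Finset.notMem_empty x)
      have hS1 : (D.filter (fun W' => ∃ x ∈ X, x ∈ W')).card ≤ 1 := by
        have := Finset.card_le_card hS
        simpa using this
      omega
    · -- 2 ≤ b ≤ r : recurse
      set b := (G ∩ W).card with hbdef
      have hb2 : 2 ≤ b := hb
      have hbr : b ≤ r := by omega
      set D' := D.erase W with hD'
      set G' := G.filter (fun x => x ∉ W) with hG'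
      have hD'card : D'.card = D.card - 1 := Finset.card_erase_of_mem hWD
      have hGinter : (G.filter (fun x => x ∈ W)).card = b := by
        rw [hbdef, Finset.filter_mem_eq_inter]
      have hG'card : G'.card = G.card - b := by
        have hx : (G.filter (fun x => x ∈ W)).card + (G.filter (fun x => x ∉ W)).card = G.card :=
          Finset.card_filter_add_card_filter_not (p := fun x => x ∈ W)
        rw [← hG'] at hx
        omega
      have hG'mem : ∀ x ∈ G', ∃ U ∈ D', x ∈ U := by
        intro x hx
        obtain ⟨hxG, hxW⟩ := Finset.mem_filter.mp hx
        obtain ⟨U, hU, hxU⟩ := hGD x hxG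
        refine ⟨U, Finset.mem_erase.mpr ⟨fun h => hxW (h ▸ hxU), hU⟩, hxU⟩
      have hDpos : 1 ≤ D.card := Finset.card_pos.mpr ⟨W, hWD⟩
      have hbG : b ≤ G.card := by
        rw [hbdef]; exact Finset.card_le_card Finset.inter_subset_left
      set r' := r + 1 - b with hr'
      have hr'1 : 1 ≤ r' := by omega
      have hcard' : D'.card + r' ≤ G'.card := by omega
      obtain ⟨X', hX'G', hX'card, hX'sel⟩ := ihN D' (by omega)
        (fun U hU V hV hne => hpd U (Finset.erase_subset _ _ hU) V (Finset.erase_subset _ _ hV) hne)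
        G' hG'mem r' hr'1 hcard'
      have hdisj : Disjoint X' (G ∩ W) := by
        rw [Finset.disjoint_left]
        intro x hx hxGW
        exact (Finset.mem_filter.mp (hX'G' hx)).2 (Finset.mem_inter.mp hxGW).2
      refine ⟨X' ∪ (G ∩ W), ?_, ?_, ?_⟩
      · apply Finset.union_subset
        · exact hX'G'.trans (Finset.filter_subset _ _)
        · exact Finset.inter_subset_left
      · rw [Finset.card_union_of_disjoint hdisj]
        omega
      · have hSsub : D.filter (fun W' => ∃ x ∈ X' ∪ (G ∩ W), x ∈ W') ⊆
            insert W (D'.filter (fun W' => ∃ x ∈ X', x ∈ W')) := by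
          intro W' hW'
          obtain ⟨hW'D, x, hxX, hxW'⟩ := Finset.mem_filter.mp hW'
          by_cases hWW' : W' = W
          · exact Finset.mem_insert.mpr (Or.inl hWW')
          · rcases Finset.mem_union.mp hxX with hx1 | hx2
            · exact Finset.mem_insert.mpr (Or.inr (Finset.mem_filter.mpr
                ⟨Finset.mem_erase.mpr ⟨hWW', hW'D⟩, x, hx1, hxW'⟩))
            · exfalso
              have hxW := (Finset.mem_inter.mp hx2).2
              have := hpd W' hW'D W hWD hWW'
              exact absurd (Finset.mem_inter.mpr ⟨hxW', hxW⟩)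
                (by rw [this]; exact Finset.notMem_empty x)
        have h1 : (D.filter (fun W' => ∃ x ∈ X' ∪ (G ∩ W), x ∈ W')).card ≤
            1 + (D'.filter (fun W' => ∃ x ∈ X', x ∈ W')).card := by
          refine le_trans (Finset.card_le_card hSsub) ?_
          refine le_trans (Finset.card_insert_le _ _) (by omega)
        have hXcard_eq : (X' ∪ (G ∩ W)).card = X'.card + b :=
          Finset.card_union_of_disjoint hdisj
        omega


set_option maxHeartbeats 2000000 in
theorem main_bound {α : Type*} [DecidableEq α] (k : ℕ) (hk : 3 ≤ k) :
    ∀ s : ℕ, ∀ F : Finset (Finset α), (∀ U ∈ F, U.card ≤ s) →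
      (¬ ∃ B ⊆ F, B.card = k ∧ IsSunflower B) → (F.card : ℝ) < TT k s := by
  intro s
  induction s using Nat.strong_induction_on with
  | _ s ih =>
  rcases s with _ | _ | n
  · -- s = 0
    intro F hcard hfree
    have hsub : F ⊆ {∅} := by
      intro U hU
      rw [Finset.mem_singleton]
      exact Finset.card_eq_zero.mp (le_antisymm (hcard U hU) (Nat.zero_le _))
    have h1 : F.card ≤ 1 := le_trans (Finset.card_le_card hsub) (by simp)
    have h2 : (F.card : ℝ) ≤ 1 := by exact_mod_cast h1
    have : TT k 0 = RC ^ 2 := by unfold TT; simp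
    rw [this]
    nlinarith [RC_lb]
  · -- s = 1
    intro F hcard hfree
    have hpd : ∀ U ∈ F, ∀ V ∈ F, U ≠ V → U ∩ V = ∅ := by
      intro U hU V hV hne
      rw [Finset.eq_empty_iff_forall_notMem]
      intro a ha
      obtain ⟨haU, haV⟩ := Finset.mem_inter.mp ha
      have h1 := Finset.card_le_one.mp (hcard U hU)
      have h2 := Finset.card_le_one.mp (hcard V hV)
      apply hne
      ext b
      constructor
      · intro hb; rw [h1 b hb a haU]; exact haV
      · intro hb; rw [h2 b hb a haV]; exact haU
    have h1 : F.card < k := no_k_disjoint hfree (le_refl F) hpd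
    rw [TT_one]
    have h2 : (F.card : ℝ) < (k:ℝ) := by exact_mod_cast h1
    have hk0 : (0:ℝ) ≤ (k:ℝ) := by positivity
    nlinarith [RC_lb]
  · -- s = n + 2
    intro F hcard hfree
    classical
    have hk0 : 0 < k := by omega
    have hkR : (3:ℝ) ≤ (k:ℝ) := by exact_mod_cast hk
    set Φ := TT k (n+1) with hΦdef
    set Tn := TT k n with hTndef
    have hΦpos : 0 < Φ := TT_pos k (n+1) hk0
    have hTnpos : 0 < Tn := TT_pos k n hk0
    have hrel : RC * Φ = (k:ℝ) * ((n:ℝ)+1) * Tn := by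
      rw [hΦdef, TT_succ, hTndef]
      field_simp
      exact mul_div_cancel_left₀ _ RC_pos.ne'
    have hTTtop : TT k (n+2) = ((k:ℝ) * ((n:ℝ)+2) / RC) * Φ := by
      rw [TT_succ k (n+1), hΦdef]
      push_cast
      ring_nf
    have hΦck : RC * k ≤ Φ := TT_ge k n (by omega)
    -- degree bound
    have hdeg : ∀ x : α, ((F.filter (fun U => x ∈ U)).card : ℝ) ≤ Φ := by
      intro x
      set G := (F.filter (fun U => x ∈ U)).image (fun U => U.erase x) with hG
      have hinj : Set.InjOn (fun (U : Finset α) => U.erase x)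
          ((F.filter (fun U => x ∈ U) : Finset (Finset α)) : Set (Finset α)) := by
        intro U hU V hV h
        have hxU : x ∈ U := (Finset.mem_filter.mp hU).2
        have hxV : x ∈ V := (Finset.mem_filter.mp hV).2
        have h' : U.erase x = V.erase x := h
        rw [← Finset.insert_erase hxU, h', Finset.insert_erase hxV]
      have hGcard : G.card = (F.filter (fun U => x ∈ U)).card :=
        Finset.card_image_of_injOn hinj
      have hGb : ∀ V ∈ G, V.card ≤ n + 1 := by
        intro V hV
        obtain ⟨U, hU, rfl⟩ := Finset.mem_image.mp hV
        have hxU : x ∈ U := (Finset.mem_filter.mp hU).2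
        have := hcard U (Finset.mem_filter.mp hU).1
        rw [Finset.card_erase_of_mem hxU]
        omega
      have hGfree : ¬ ∃ B ⊆ G, B.card = k ∧ IsSunflower B := by
        apply lift_free {x} _ hfree
        intro V hV
        obtain ⟨U, hU, rfl⟩ := Finset.mem_image.mp hV
        have hxU : x ∈ U := (Finset.mem_filter.mp hU).2
        constructor
        · intro a ha
          rw [Finset.mem_singleton] at ha
          subst ha
          exact Finset.notMem_erase a U
        · have : U.erase x ∪ {x} = U := by
            rw [Finset.union_comm, ← Finset.insert_eq, Finset.insert_erase hxU]
          rw [this]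
          exact (Finset.mem_filter.mp hU).1
      have := ih (n+1) (by omega) G hGb hGfree
      rw [hGcard] at this
      exact le_of_lt this
    -- pair degree bound
    have hdeg2 : ∀ x z : α, x ≠ z →
        ((F.filter (fun U => x ∈ U ∧ z ∈ U)).card : ℝ) ≤ Tn := by
      intro x z hxz
      set P := F.filter (fun U => x ∈ U ∧ z ∈ U) with hP
      set G := P.image (fun U => (U.erase x).erase z) with hG
      have hmemP : ∀ U ∈ P, x ∈ U ∧ z ∈ U ∧ U ∈ F := by
        intro U hU
        obtain ⟨h1, h2, h3⟩ := Finset.mem_filter.mp hU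
        exact ⟨h2, h3, h1⟩
      have hrec : ∀ U ∈ P, ((U.erase x).erase z) ∪ {x, z} = U := by
        intro U hU
        obtain ⟨hxU, hzU, _⟩ := hmemP U hU
        ext a
        simp only [Finset.mem_union, Finset.mem_erase, Finset.mem_insert, Finset.mem_singleton]
        constructor
        · rintro (⟨_, _, h⟩ | (rfl | rfl)) <;> first | exact h | exact hxU | exact hzU
        · intro haU
          by_cases hax : a = x
          · right; left; exact hax
          · by_cases haz : a = z
            · right; right; exact haz
            · left; exact ⟨haz, hax, haU⟩
      have hinj : Set.InjOn (fun (U : Finset α) => (U.erase x).erase z)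
          ((P : Finset (Finset α)) : Set (Finset α)) := by
        intro U hU V hV h
        have h' : (U.erase x).erase z = (V.erase x).erase z := h
        have := hrec U hU
        have h2 := hrec V hV
        rw [← this, ← h2, h']
      have hGcard : G.card = P.card := Finset.card_image_of_injOn hinj
      have hGb : ∀ V ∈ G, V.card ≤ n := by
        intro V hV
        obtain ⟨U, hU, rfl⟩ := Finset.mem_image.mp hV
        obtain ⟨hxU, hzU, hUF⟩ := hmemP U hU
        have hzU' : z ∈ U.erase x := Finset.mem_erase.mpr ⟨fun h => hxz (h.symm), hzU⟩
        have := hcard U hUF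
        rw [Finset.card_erase_of_mem hzU', Finset.card_erase_of_mem hxU]
        omega
      have hGfree : ¬ ∃ B ⊆ G, B.card = k ∧ IsSunflower B := by
        apply lift_free {x, z} _ hfree
        intro V hV
        obtain ⟨U, hU, rfl⟩ := Finset.mem_image.mp hV
        constructor
        · intro a ha
          rcases Finset.mem_insert.mp ha with rfl | ha
          · intro hmem
            exact (Finset.mem_erase.mp (Finset.mem_of_mem_erase hmem)).1 rfl
          · rw [Finset.mem_singleton] at ha
            subst ha
            intro hmem
            exact (Finset.mem_erase.mp hmem).1 rfl
        · rw [hrec U hU]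
          exact (hmemP U hU).2.2
      have := ih n (by omega) G hGb hGfree
      rw [hGcard] at this
      exact le_of_lt this
    -- maximal pairwise disjoint subfamily
    have h𝒞ne : (F.powerset.filter
        (fun D => ∀ U ∈ D, ∀ V ∈ D, U ≠ V → U ∩ V = ∅)).Nonempty := by
      refine ⟨∅, Finset.mem_filter.mpr ⟨Finset.empty_mem_powerset F, ?_⟩⟩
      intro U hU
      simp at hU
    obtain ⟨D, hDmax⟩ := Finset.exists_maximal h𝒞ne
    have hD𝒞 : D ∈ _ := hDmax.prop
    have hDF : D ⊆ F := Finset.mem_powerset.mp (Finset.mem_filter.mp hD𝒞).1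
    have hDpd : ∀ U ∈ D, ∀ V ∈ D, U ≠ V → U ∩ V = ∅ := (Finset.mem_filter.mp hD𝒞).2
    set A := D.biUnion id with hA
    set t := D.card with ht
    have htk : t < k := no_k_disjoint hfree hDF hDpd
    have hWA : ∀ W ∈ D, W ⊆ A := fun W hW => Finset.subset_biUnion_of_mem id hW
    have hUA : ∀ U ∈ F, U ∩ A = ∅ → U = ∅ := by
      intro U hU hUA0
      by_contra hUne
      have hUD : U ∉ D := by
        intro h
        apply hUne
        have hsub : U ⊆ A := hWA U h
        have : U ∩ A = U := Finset.inter_eq_left.mpr hsub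
        rw [← this, hUA0]
      have hins : insert U D ∈ F.powerset.filter
          (fun D' => ∀ U' ∈ D', ∀ V' ∈ D', U' ≠ V' → U' ∩ V' = ∅) := by
        refine Finset.mem_filter.mpr ⟨Finset.mem_powerset.mpr ?_, ?_⟩
        · exact Finset.insert_subset hU hDF
        · have hcross : ∀ V' ∈ D, U ∩ V' = ∅ := by
            intro V' hV'
            rw [Finset.eq_empty_iff_forall_notMem]
            intro a ha
            obtain ⟨h3, h4⟩ := Finset.mem_inter.mp ha
            have : a ∈ U ∩ A := Finset.mem_inter.mpr ⟨h3, hWA V' hV' h4⟩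
            rw [hUA0] at this
            exact Finset.notMem_empty a this
          intro U' hU' V' hV' hne
          rcases Finset.mem_insert.mp hU' with rfl | hU'2
          · rcases Finset.mem_insert.mp hV' with h2 | hV'2
            · exact absurd h2.symm hne
            · exact hcross V' hV'2
          · rcases Finset.mem_insert.mp hV' with rfl | hV'2
            · rw [Finset.inter_comm]; exact hcross U' hU'2
            · exact hDpd U' hU'2 V' hV'2 hne
      exact hDmax.not_gt hins (Finset.ssubset_insert hUD)
    have hAcard : A.card ≤ t * (n + 2) := by
      refine le_trans Finset.card_biUnion_le ?_
      have : ∀ W ∈ D, (id W).card ≤ n + 2 := fun W hW => hcard W (hDF hW)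
      calc ∑ W ∈ D, (id W).card ≤ D.card • (n+2) := Finset.sum_le_card_nsmul _ _ _ this
        _ = t * (n + 2) := by rw [smul_eq_mul]
    set In := ∑ x ∈ A, (F.filter (fun U => x ∈ U)).card with hIn
    have hInR : (In : ℝ) ≤ ((t : ℝ) * ((n:ℝ)+2)) * Φ := by
      have h1 : (In : ℝ) = ∑ x ∈ A, (((F.filter (fun U => x ∈ U)).card : ℕ) : ℝ) := by
        rw [hIn]; push_cast; ring
      rw [h1]
      calc ∑ x ∈ A, (((F.filter (fun U => x ∈ U)).card : ℕ) : ℝ)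
          ≤ A.card • Φ := Finset.sum_le_card_nsmul _ _ _ (fun x _ => hdeg x)
        _ = (A.card : ℝ) * Φ := by rw [nsmul_eq_mul]
        _ ≤ ((t : ℝ) * ((n:ℝ)+2)) * Φ := by
            apply mul_le_mul_of_nonneg_right _ hΦpos.le
            have h2 : (A.card : ℝ) ≤ ((t * (n+2) : ℕ) : ℝ) := by exact_mod_cast hAcard
            push_cast at h2
            linarith

    rw [hTTtop]
    by_cases hsplit : 4 * t ≤ 3 * k
    · -- Case A: incidence count suffices
      have hmF : F.card ≤ 1 + In := by
        have hc1 : F.filter (fun U => U ∩ A = ∅) ⊆ {∅} := by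
          intro U hU
          obtain ⟨hUF, hU0⟩ := Finset.mem_filter.mp hU
          rw [Finset.mem_singleton]
          exact hUA U hUF hU0
        have hc2 : F.filter (fun U => ¬ (U ∩ A = ∅)) ⊆
            A.biUnion (fun x => F.filter (fun U => x ∈ U)) := by
          intro U hU
          obtain ⟨hUF, hU0⟩ := Finset.mem_filter.mp hU
          obtain ⟨a, ha⟩ := Finset.nonempty_iff_ne_empty.mpr hU0
          obtain ⟨haU, haA⟩ := Finset.mem_inter.mp ha
          exact Finset.mem_biUnion.mpr ⟨a, haA, Finset.mem_filter.mpr ⟨hUF, haU⟩⟩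
        have hsp := Finset.card_filter_add_card_filter_not
          (s := F) (p := fun U => U ∩ A = ∅)
        have hb1 : (F.filter (fun U => U ∩ A = ∅)).card ≤ 1 := by
          have := Finset.card_le_card hc1
          simpa using this
        have hb2 : (F.filter (fun U => ¬ (U ∩ A = ∅))).card ≤ In := by
          refine le_trans (Finset.card_le_card hc2) ?_
          exact Finset.card_biUnion_le
        omega
      -- numeric
      have hF1 : (F.card : ℝ) ≤ 1 + (t:ℝ) * ((n:ℝ)+2) * Φ := by
        have h1 : (F.card : ℝ) ≤ 1 + (In : ℝ) := by exact_mod_cast hmF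
        linarith [hInR]
      have hn0 : (0:ℝ) ≤ (n:ℝ) := by positivity
      have htR : (t:ℝ) * ((n:ℝ)+2) * Φ ≤ (3/4) * ((k:ℝ) * ((n:ℝ)+2)) * Φ := by
        have h4 : (4:ℝ) * t ≤ 3 * k := by exact_mod_cast hsplit
        have hn2 : (0:ℝ) ≤ (n:ℝ) + 2 := by linarith
        calc (t:ℝ) * ((n:ℝ)+2) * Φ ≤ (3/4*(k:ℝ)) * ((n:ℝ)+2) * Φ := by
              apply mul_le_mul_of_nonneg_right _ hΦpos.le
              apply mul_le_mul_of_nonneg_right _ hn2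
              linarith
          _ = (3/4) * ((k:ℝ) * ((n:ℝ)+2)) * Φ := by ring
      rw [div_mul_eq_mul_div, lt_div_iff₀ RC_pos]
      have hks : 2 * RC * (k:ℝ)^2 ≤ (k:ℝ) * ((n:ℝ)+2) * Φ := by
        have h1 : (k:ℝ)*2*Φ ≤ (k:ℝ)*((n:ℝ)+2)*Φ := by
          apply mul_le_mul_of_nonneg_right _ hΦpos.le
          have : (2:ℝ) ≤ (n:ℝ)+2 := by linarith
          nlinarith [hkR]
        have h2 : (k:ℝ)*2*(RC*(k:ℝ)) ≤ (k:ℝ)*2*Φ := by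
          apply mul_le_mul_of_nonneg_left hΦck (by positivity)
        have e : (k:ℝ)*2*(RC*(k:ℝ)) = 2*RC*(k:ℝ)^2 := by ring
        linarith
      have hgoal : ((1:ℝ) + (3/4) * ((k:ℝ) * ((n:ℝ)+2)) * Φ) * RC <
          (k:ℝ) * ((n:ℝ)+2) * Φ := by
        nlinarith [hks, RC_lb, RC_ub, hkR, sq_nonneg ((k:ℝ) - 3)]
      have hle : (F.card : ℝ) * RC ≤ ((1:ℝ) + (3/4) * ((k:ℝ) * ((n:ℝ)+2)) * Φ) * RC := by
        apply mul_le_mul_of_nonneg_right _ RC_pos.le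
        linarith
      linarith
    · -- Case B
      push_neg at hsplit
      have hk5 : 5 ≤ k := by omega
      set r := k - t with hrdef
      have hr1 : 1 ≤ r := by omega
      have hrk : t + r = k := by omega
      set θ : ℝ := 2 * ((k:ℝ) - t) * ((n:ℝ)+1) * Tn with hθdef
      have hktR : (0:ℝ) < (k:ℝ) - t := by
        have : (t:ℝ) < (k:ℝ) := by exact_mod_cast htk
        linarith
      have hθpos : 0 < θ := by
        rw [hθdef]
        have hn1 : (0:ℝ) < (n:ℝ) + 1 := by positivity
        positivity
      set Cx := fun x : α => F.filter (fun U => U ∩ A = {x}) with hCxdef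
      have hCxF : ∀ x, Cx x ⊆ F := fun x => Finset.filter_subset _ _
      have hCxmem : ∀ x, ∀ U ∈ Cx x, x ∈ U := by
        intro x U hU
        have h1 : U ∩ A = {x} := (Finset.mem_filter.mp hU).2
        have : x ∈ U ∩ A := by rw [h1]; exact Finset.mem_singleton_self x
        exact (Finset.mem_inter.mp this).1
      have hCxdeg : ∀ x, ((Cx x).card : ℝ) ≤ Φ := by
        intro x
        refine le_trans ?_ (hdeg x)
        have : Cx x ⊆ F.filter (fun U => x ∈ U) := by
          intro U hU
          exact Finset.mem_filter.mpr ⟨hCxF x hU, hCxmem x U hU⟩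
        exact_mod_cast Finset.card_le_card this
      set Big := A.filter (fun x => θ < ((Cx x).card : ℝ)) with hBigdef
      -- greedy construction of pairwise disjoint anchored petals
      have hgreedy : ∀ N : ℕ, ∀ X : Finset α, X.card = N → X ⊆ Big → X.card ≤ 2*r →
          ∃ φ : α → Finset α, (∀ x ∈ X, φ x ∈ Cx x) ∧
            (∀ x ∈ X, ∀ y ∈ X, x ≠ y → φ x ∩ φ y = ∅) := by
        intro N
        induction N with
        | zero =>
          intro X hX0 _ _
          have : X = ∅ := Finset.card_eq_zero.mp hX0
          subst this
          exact ⟨fun _ => ∅, by simp, by simp⟩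
        | succ N ihN =>
          intro X hXcard hXBig hX2r
          obtain ⟨x, hxX⟩ := Finset.card_pos.mp (by rw [hXcard]; exact Nat.succ_pos N)
          have hX'card : (X.erase x).card = N := by
            rw [Finset.card_erase_of_mem hxX, hXcard]
            omega
          obtain ⟨φ', hφ'1, hφ'2⟩ := ihN (X.erase x) hX'card
            ((Finset.erase_subset x X).trans hXBig) (by rw [hX'card]; omega)
          set Z := (X.erase x).biUnion (fun y => (φ' y) \ A) with hZdef
          have hanchor : ∀ y ∈ X.erase x, (φ' y) ∩ A = {y} := by
            intro y hy
            exact (Finset.mem_filter.mp (hφ'1 y hy)).2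
          have hZcard : Z.card ≤ N * (n+1) := by
            refine le_trans Finset.card_biUnion_le ?_
            have hbnd : ∀ y ∈ X.erase x, ((φ' y) \ A).card ≤ n + 1 := by
              intro y hy
              have h1 : (φ' y).card ≤ n+2 := hcard _ (hCxF _ (hφ'1 y hy))
              have h2 : ((φ' y) ∩ A).card = 1 := by
                rw [hanchor y hy]; exact Finset.card_singleton y
              have h3 := Finset.card_inter_add_card_sdiff (φ' y) A
              omega
            calc ∑ y ∈ X.erase x, ((φ' y) \ A).card
                ≤ (X.erase x).card • (n+1) := Finset.sum_le_card_nsmul _ _ _ hbnd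
              _ = N * (n+1) := by rw [smul_eq_mul, hX'card]
          have hxBig : x ∈ Big := hXBig hxX
          have hxA : x ∈ A := (Finset.mem_filter.mp hxBig).1
          have hxθ : θ < ((Cx x).card : ℝ) := (Finset.mem_filter.mp hxBig).2
          have hZA : ∀ z ∈ Z, z ∉ A := by
            intro z hz
            obtain ⟨y, hy, hzy⟩ := Finset.mem_biUnion.mp hz
            exact (Finset.mem_sdiff.mp hzy).2
          set Sub := (Cx x).filter (fun U => (U ∩ Z).Nonempty) with hSubdef
          have hSubsub : Sub ⊆ Z.biUnion (fun z => F.filter (fun U => x ∈ U ∧ z ∈ U)) := by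
            intro U hU
            obtain ⟨hUC, w, hw⟩ := Finset.mem_filter.mp hU
            obtain ⟨hwU, hwZ⟩ := Finset.mem_inter.mp hw
            exact Finset.mem_biUnion.mpr ⟨w, hwZ,
              Finset.mem_filter.mpr ⟨hCxF x hUC, hCxmem x U hUC, hwU⟩⟩
          have hSubR : ((Sub.card : ℝ)) < ((Cx x).card : ℝ) := by
            have h1 : Sub.card ≤ ∑ z ∈ Z, (F.filter (fun U => x ∈ U ∧ z ∈ U)).card :=
              le_trans (Finset.card_le_card hSubsub) Finset.card_biUnion_le
            have h2 : ((∑ z ∈ Z, (F.filter (fun U => x ∈ U ∧ z ∈ U)).card : ℕ) : ℝ)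
                ≤ (Z.card : ℝ) * Tn := by
              push_cast
              calc ∑ z ∈ Z, (((F.filter (fun U => x ∈ U ∧ z ∈ U)).card : ℕ) : ℝ)
                  ≤ Z.card • Tn := by
                    apply Finset.sum_le_card_nsmul
                    intro z hz
                    have hzx : x ≠ z := fun h => (hZA z hz) (h ▸ hxA)
                    exact hdeg2 x z hzx
                _ = (Z.card : ℝ) * Tn := by rw [nsmul_eq_mul]
            have h3 : (Z.card : ℝ) * Tn ≤ ((N:ℝ) * ((n:ℝ)+1)) * Tn := by
              apply mul_le_mul_of_nonneg_right _ hTnpos.le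
              have : (Z.card : ℝ) ≤ ((N * (n+1) : ℕ) : ℝ) := by exact_mod_cast hZcard
              push_cast at this
              linarith
            have h4 : ((N:ℝ) * ((n:ℝ)+1)) * Tn ≤ ((2*(r:ℝ) - 1) * ((n:ℝ)+1)) * Tn := by
              apply mul_le_mul_of_nonneg_right _ hTnpos.le
              apply mul_le_mul_of_nonneg_right _ (by positivity)
              have : (N:ℝ) + 1 ≤ 2*(r:ℝ) := by exact_mod_cast (hXcard ▸ hX2r)
              linarith
            have h5 : ((2*(r:ℝ) - 1) * ((n:ℝ)+1)) * Tn < θ := by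
              rw [hθdef]
              have hkt : ((k:ℝ) - t) = (r:ℝ) := by
                have : ((t + r : ℕ) : ℝ) = (k:ℝ) := by exact_mod_cast congrArg Nat.cast hrk
                push_cast at this
                linarith
              rw [hkt]
              have hn1 : (0:ℝ) < (n:ℝ) + 1 := by positivity
              nlinarith [hTnpos, hn1]
            have h6 : (Sub.card : ℝ) ≤ ((∑ z ∈ Z, (F.filter (fun U => x ∈ U ∧ z ∈ U)).card : ℕ) : ℝ) := by
              exact_mod_cast h1
            linarith [hxθ]
          obtain ⟨U, hUC, hUS⟩ : ∃ U ∈ Cx x, U ∉ Sub := by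
            by_contra h
            push_neg at h
            have hsub : Cx x ⊆ Sub := fun U hU => h U hU
            have := Finset.card_le_card hsub
            have : ((Cx x).card : ℝ) ≤ (Sub.card : ℝ) := by exact_mod_cast this
            linarith
          have hUZ : ∀ a ∈ U, a ∉ Z := by
            intro a haU haZ
            exact hUS (Finset.mem_filter.mpr ⟨hUC, ⟨a, Finset.mem_inter.mpr ⟨haU, haZ⟩⟩⟩)
          have hUanchor : U ∩ A = {x} := (Finset.mem_filter.mp hUC).2
          have key : ∀ y ∈ X.erase x, U ∩ φ' y = ∅ := by
            intro y hy
            rw [Finset.eq_empty_iff_forall_notMem]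
            intro a ha
            obtain ⟨haU, haφ⟩ := Finset.mem_inter.mp ha
            by_cases haA : a ∈ A
            · have h1 : a = x := by
                have : a ∈ U ∩ A := Finset.mem_inter.mpr ⟨haU, haA⟩
                rw [hUanchor] at this
                exact Finset.mem_singleton.mp this
              have h2 : a = y := by
                have : a ∈ (φ' y) ∩ A := Finset.mem_inter.mpr ⟨haφ, haA⟩
                rw [hanchor y hy] at this
                exact Finset.mem_singleton.mp this
              exact (Finset.mem_erase.mp hy).1 (h2.symm.trans h1)
            · have haZ : a ∈ Z := Finset.mem_biUnion.mpr
                ⟨y, hy, Finset.mem_sdiff.mpr ⟨haφ, haA⟩⟩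
              exact hUZ a haU haZ
          refine ⟨Function.update φ' x U, ?_, ?_⟩
          · intro y hyX
            rcases eq_or_ne y x with rfl | hne
            · rw [Function.update_self]; exact hUC
            · rw [Function.update_of_ne hne]
              exact hφ'1 y (Finset.mem_erase.mpr ⟨hne, hyX⟩)
          · intro y hyX y' hy'X hne
            rcases eq_or_ne y x with rfl | hyx
            · rw [Function.update_self, Function.update_of_ne (Ne.symm hne)]
              exact key y' (Finset.mem_erase.mpr ⟨Ne.symm hne, hy'X⟩)
            · rw [Function.update_of_ne hyx]
              rcases eq_or_ne y' x with rfl | hy'x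
              · rw [Function.update_self, Finset.inter_comm]
                exact key y (Finset.mem_erase.mpr ⟨hyx, hyX⟩)
              · rw [Function.update_of_ne hy'x]
                exact hφ'2 y (Finset.mem_erase.mpr ⟨hyx, hyX⟩)
                  y' (Finset.mem_erase.mpr ⟨hy'x, hy'X⟩) hne
      -- Big is small
      have hBigcard : Big.card < k := by
        by_contra hBigk
        push_neg at hBigk
        have hBigA : ∀ x ∈ Big, ∃ W ∈ D, x ∈ W := by
          intro x hx
          have hxA : x ∈ A := (Finset.mem_filter.mp hx).1
          obtain ⟨W, hW, hxW⟩ := Finset.mem_biUnion.mp hxA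
          exact ⟨W, hW, hxW⟩
        obtain ⟨X, hXBig, hX2r, hXsel⟩ := select D.card D le_rfl hDpd Big hBigA r hr1
          (by omega)
        obtain ⟨φ, hφ1, hφ2⟩ := hgreedy X.card X rfl hXBig hX2r
        have hanchor : ∀ x ∈ X, (φ x) ∩ A = {x} := by
          intro x hx
          exact (Finset.mem_filter.mp (hφ1 x hx)).2
        have hxφ : ∀ x ∈ X, x ∈ φ x := fun x hx => hCxmem x (φ x) (hφ1 x hx)
        set Keep := D.filter (fun W => ¬ ∃ x ∈ X, x ∈ W) with hKeepdef
        set Pet := X.image φ with hPetdef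
        have hPetcard : Pet.card = X.card := by
          rw [hPetdef]
          apply Finset.card_image_of_injOn
          intro a ha b hb hab
          by_contra hne
          have h := hφ2 a ha b hb hne
          have h2 : a ∈ φ a ∩ φ b := Finset.mem_inter.mpr
            ⟨hxφ a ha, by rw [← hab]; exact hxφ a ha⟩
          rw [h] at h2
          exact Finset.notMem_empty a h2
        have hdisjKP : Disjoint Keep Pet := by
          rw [Finset.disjoint_left]
          intro W hWK hWP
          obtain ⟨x, hxX, rfl⟩ := Finset.mem_image.mp hWP
          exact (Finset.mem_filter.mp hWK).2 ⟨x, hxX, hxφ x hxX⟩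
        have hpetal_keep : ∀ x ∈ X, ∀ W ∈ Keep, φ x ∩ W = ∅ := by
          intro x hx W hW
          rw [Finset.eq_empty_iff_forall_notMem]
          intro a ha
          obtain ⟨haφ, haW⟩ := Finset.mem_inter.mp ha
          have haA : a ∈ A := hWA W (Finset.filter_subset _ _ hW) haW
          have hax : a = x := by
            have : a ∈ (φ x) ∩ A := Finset.mem_inter.mpr ⟨haφ, haA⟩
            rw [hanchor x hx] at this
            exact Finset.mem_singleton.mp this
          exact (Finset.mem_filter.mp hW).2 ⟨x, hx, hax ▸ haW⟩
        set B0 := Keep ∪ Pet with hB0def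
        have hB0F : B0 ⊆ F := by
          apply Finset.union_subset
          · exact (Finset.filter_subset _ _).trans hDF
          · intro W hW
            obtain ⟨x, hxX, rfl⟩ := Finset.mem_image.mp hW
            exact hCxF x (hφ1 x hxX)
        have hB0pd : ∀ U ∈ B0, ∀ V ∈ B0, U ≠ V → U ∩ V = ∅ := by
          intro U hU V hV hne
          rcases Finset.mem_union.mp hU with hU1 | hU1 <;>
            rcases Finset.mem_union.mp hV with hV1 | hV1
          · exact hDpd U (Finset.filter_subset _ _ hU1) V (Finset.filter_subset _ _ hV1) hne
          · obtain ⟨x, hxX, rfl⟩ := Finset.mem_image.mp hV1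
            rw [Finset.inter_comm]
            exact hpetal_keep x hxX U hU1
          · obtain ⟨x, hxX, rfl⟩ := Finset.mem_image.mp hU1
            exact hpetal_keep x hxX V hV1
          · obtain ⟨x, hxX, rfl⟩ := Finset.mem_image.mp hU1
            obtain ⟨y, hyX, rfl⟩ := Finset.mem_image.mp hV1
            have hxy : x ≠ y := fun h => hne (by rw [h])
            exact hφ2 x hxX y hyX hxy
        have hKeepcard : Keep.card = t - (D.filter (fun W => ∃ x ∈ X, x ∈ W)).card := by
          have hx : (D.filter (fun W => ∃ x ∈ X, x ∈ W)).card +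
              (D.filter (fun W => ¬ ∃ x ∈ X, x ∈ W)).card = D.card :=
            Finset.card_filter_add_card_filter_not (p := fun W => ∃ x ∈ X, x ∈ W)
          rw [← hKeepdef] at hx
          omega
        have hScard : (D.filter (fun W => ∃ x ∈ X, x ∈ W)).card ≤ t :=
          Finset.card_le_card (Finset.filter_subset _ _)
        have hB0card : k ≤ B0.card := by
          rw [hB0def, Finset.card_union_of_disjoint hdisjKP, hPetcard, hKeepcard]
          omega
        have := no_k_disjoint hfree hB0F hB0pd
        omega
      -- m1 accounting
      set m1 := ∑ x ∈ A, (Cx x).card with hm1def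
      have hf1 : F.filter (fun U => (U ∩ A).card = 1) = A.biUnion Cx := by
        ext U
        constructor
        · intro hU
          obtain ⟨hUF, hU1⟩ := Finset.mem_filter.mp hU
          obtain ⟨x, hx⟩ := Finset.card_eq_one.mp hU1
          have hxA : x ∈ A := by
            have : x ∈ U ∩ A := by rw [hx]; exact Finset.mem_singleton_self x
            exact (Finset.mem_inter.mp this).2
          exact Finset.mem_biUnion.mpr ⟨x, hxA, Finset.mem_filter.mpr ⟨hUF, hx⟩⟩
        · intro hU
          obtain ⟨x, hxA, hUC⟩ := Finset.mem_biUnion.mp hU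
          obtain ⟨hUF, hUx⟩ := Finset.mem_filter.mp hUC
          refine Finset.mem_filter.mpr ⟨hUF, ?_⟩
          rw [hUx]
          exact Finset.card_singleton x
      have hf1card : (F.filter (fun U => (U ∩ A).card = 1)).card = m1 := by
        rw [hf1, hm1def]
        apply Finset.card_biUnion
        intro x hx y hy hxy
        rw [Function.onFun, Finset.disjoint_left]
        intro U hU1 hU2
        have e1 : U ∩ A = {x} := (Finset.mem_filter.mp hU1).2
        have e2 : U ∩ A = {y} := (Finset.mem_filter.mp hU2).2
        have : ({x} : Finset α) = {y} := by rw [← e1, e2]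
        exact hxy (Finset.singleton_injective this)
      -- partition count
      have hm2 : 2 * F.card ≤ 2 + m1 + In := by
        have hcover : F ⊆ (F.filter (fun U => (U ∩ A).card = 0)) ∪
            ((F.filter (fun U => (U ∩ A).card = 1)) ∪
             (F.filter (fun U => 2 ≤ (U ∩ A).card))) := by
          intro U hU
          rcases Nat.lt_or_ge (U ∩ A).card 2 with h2 | h2
          · rcases Nat.lt_or_ge (U ∩ A).card 1 with h1 | h1
            · exact Finset.mem_union_left _ (Finset.mem_filter.mpr ⟨hU, by omega⟩)
            · exact Finset.mem_union_right _ (Finset.mem_union_left _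
                (Finset.mem_filter.mpr ⟨hU, by omega⟩))
          · exact Finset.mem_union_right _ (Finset.mem_union_right _
              (Finset.mem_filter.mpr ⟨hU, h2⟩))
        have hFle : F.card ≤ (F.filter (fun U => (U ∩ A).card = 0)).card +
            ((F.filter (fun U => (U ∩ A).card = 1)).card +
             (F.filter (fun U => 2 ≤ (U ∩ A).card)).card) := by
          refine le_trans (Finset.card_le_card hcover) ?_
          refine le_trans (Finset.card_union_le _ _) ?_
          have := Finset.card_union_le (F.filter (fun U => (U ∩ A).card = 1))
            (F.filter (fun U => 2 ≤ (U ∩ A).card))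
          omega
        have hf0 : (F.filter (fun U => (U ∩ A).card = 0)).card ≤ 1 := by
          have hsub : F.filter (fun U => (U ∩ A).card = 0) ⊆ {∅} := by
            intro U hU
            obtain ⟨hUF, hU0⟩ := Finset.mem_filter.mp hU
            rw [Finset.mem_singleton]
            exact hUA U hUF (Finset.card_eq_zero.mp hU0)
          have := Finset.card_le_card hsub
          simpa using this
        have hIngre : m1 + 2 * (F.filter (fun U => 2 ≤ (U ∩ A).card)).card ≤ In := by
          have hIdent : In = ∑ U ∈ F, (A ∩ U).card := by
            rw [hIn]; exact sum_deg_eq F A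
          have hdisj12 : Disjoint (F.filter (fun U => (U ∩ A).card = 1))
              (F.filter (fun U => 2 ≤ (U ∩ A).card)) := by
            rw [Finset.disjoint_left]
            intro U h1 h2
            have e1 := (Finset.mem_filter.mp h1).2
            have e2 := (Finset.mem_filter.mp h2).2
            omega
          have hsub : (F.filter (fun U => (U ∩ A).card = 1)) ∪
              (F.filter (fun U => 2 ≤ (U ∩ A).card)) ⊆ F :=
            Finset.union_subset (Finset.filter_subset _ _) (Finset.filter_subset _ _)
          have hss : ∑ U ∈ (F.filter (fun U => (U ∩ A).card = 1)) ∪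
              (F.filter (fun U => 2 ≤ (U ∩ A).card)), (A ∩ U).card ≤ In := by
            rw [hIdent]
            exact Finset.sum_le_sum_of_subset hsub
          rw [Finset.sum_union hdisj12] at hss
          have hs1 : ∑ U ∈ F.filter (fun U => (U ∩ A).card = 1), (A ∩ U).card =
              (F.filter (fun U => (U ∩ A).card = 1)).card := by
            rw [Finset.card_eq_sum_ones]
            apply Finset.sum_congr rfl
            intro U hU
            rw [Finset.inter_comm]
            exact (Finset.mem_filter.mp hU).2
          have hs2 : 2 * (F.filter (fun U => 2 ≤ (U ∩ A).card)).card ≤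
              ∑ U ∈ F.filter (fun U => 2 ≤ (U ∩ A).card), (A ∩ U).card := by
            have := Finset.card_nsmul_le_sum (F.filter (fun U => 2 ≤ (U ∩ A).card))
              (fun U => (A ∩ U).card) 2
              (fun U hU => by
                show 2 ≤ (A ∩ U).card
                rw [Finset.inter_comm]
                exact (Finset.mem_filter.mp hU).2)
            simpa [smul_eq_mul, mul_comm] using this
          rw [hs1, hf1card] at hss
          omega
        omega
      -- m1 real bound
      have hm1R : (m1:ℝ) ≤ ((k:ℝ) - 1) * Φ + ((t:ℝ) * ((n:ℝ)+2)) * θ := by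
        have hcast : (m1:ℝ) = ∑ x ∈ A, (((Cx x).card : ℕ) : ℝ) := by
          rw [hm1def]; push_cast; ring
        rw [hcast, ← Finset.sum_filter_add_sum_filter_not A
          (fun x => θ < ((Cx x).card : ℝ))]
        have h1 : ∑ x ∈ A.filter (fun x => θ < ((Cx x).card : ℝ)),
            (((Cx x).card : ℕ) : ℝ) ≤ ((k:ℝ) - 1) * Φ := by
          calc ∑ x ∈ A.filter (fun x => θ < ((Cx x).card : ℝ)), (((Cx x).card : ℕ) : ℝ)
              ≤ (A.filter (fun x => θ < ((Cx x).card : ℝ))).card • Φ :=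
                Finset.sum_le_card_nsmul _ _ _ (fun x _ => hCxdeg x)
            _ = ((A.filter (fun x => θ < ((Cx x).card : ℝ))).card : ℝ) * Φ := by
                rw [nsmul_eq_mul]
            _ ≤ ((k:ℝ) - 1) * Φ := by
                apply mul_le_mul_of_nonneg_right _ hΦpos.le
                have hle : (A.filter (fun x => θ < ((Cx x).card : ℝ))).card ≤ k - 1 := by
                  have : (A.filter (fun x => θ < ((Cx x).card : ℝ))).card = Big.card := by
                    rw [hBigdef]
                  omega
                have hcast2 : ((A.filter (fun x => θ < ((Cx x).card : ℝ))).card : ℝ)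
                    ≤ ((k - 1 : ℕ) : ℝ) := by exact_mod_cast hle
                have : ((k - 1 : ℕ) : ℝ) = (k:ℝ) - 1 := by
                  have : 1 ≤ k := by omega
                  push_cast [this]
                  ring
                linarith
        have h2 : ∑ x ∈ A.filter (fun x => ¬ (θ < ((Cx x).card : ℝ))),
            (((Cx x).card : ℕ) : ℝ) ≤ ((t:ℝ) * ((n:ℝ)+2)) * θ := by
          calc ∑ x ∈ A.filter (fun x => ¬ (θ < ((Cx x).card : ℝ))), (((Cx x).card : ℕ) : ℝ)
              ≤ (A.filter (fun x => ¬ (θ < ((Cx x).card : ℝ)))).card • θ := by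
                apply Finset.sum_le_card_nsmul
                intro x hx
                exact le_of_not_gt (Finset.mem_filter.mp hx).2
            _ = ((A.filter (fun x => ¬ (θ < ((Cx x).card : ℝ)))).card : ℝ) * θ := by
                rw [nsmul_eq_mul]
            _ ≤ ((t:ℝ) * ((n:ℝ)+2)) * θ := by
                apply mul_le_mul_of_nonneg_right _ hθpos.le
                have hle : (A.filter (fun x => ¬ (θ < ((Cx x).card : ℝ)))).card ≤ t * (n+2) :=
                  le_trans (Finset.card_le_card (Finset.filter_subset _ _)) hAcard
                have := (Nat.cast_le (α := ℝ)).mpr hle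
                push_cast at this
                linarith
        linarith
      -- final numeric computation
      have hcast1 : 2 * (F.card : ℝ) ≤ 2 + (m1:ℝ) + (In:ℝ) := by exact_mod_cast hm2
      rw [div_mul_eq_mul_div, lt_div_iff₀ RC_pos]
      -- express θ via Φ
      have hktr : ((k:ℝ) - t) = (r:ℝ) := by
        have : ((t + r : ℕ) : ℝ) = (k:ℝ) := by exact_mod_cast congrArg Nat.cast hrk
        push_cast at this
        linarith
      have hθΦ : (k:ℝ) * θ = 2 * ((k:ℝ) - t) * RC * Φ := by
        rw [hθdef]
        have : (k:ℝ) * (2 * ((k:ℝ) - t) * ((n:ℝ)+1) * Tn) =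
            2 * ((k:ℝ) - t) * ((k:ℝ) * ((n:ℝ)+1) * Tn) := by ring
        rw [this, ← hrel]
        ring
      -- set up real variables
      set tR := (t:ℝ) with htRdef
      set kR := (k:ℝ) with hkRdef
      set sR := (n:ℝ) + 2 with hsRdef
      have hsR2 : (2:ℝ) ≤ sR := by
        rw [hsRdef]
        have : (0:ℝ) ≤ (n:ℝ) := by positivity
        linarith
      have htlb : 3 * kR < 4 * tR := by
        rw [hkRdef, htRdef]
        exact_mod_cast hsplit
      have htub : tR ≤ kR - 1 := by
        rw [hkRdef, htRdef]
        have : (t:ℝ) + 1 ≤ (k:ℝ) := by exact_mod_cast htk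
        linarith
      have hk5R : (5:ℝ) ≤ kR := by rw [hkRdef]; exact_mod_cast hk5
      -- combined bound: 2*F ≤ 2 + (k-1)Φ + t*s*θ + t*s*Φ
      have hcomb : 2 * (F.card : ℝ) ≤ 2 + (kR - 1) * Φ + (tR * sR) * θ + (tR * sR) * Φ := by
        have h1 := hInR
        have h2 := hm1R
        have h3 := hcast1
        linarith
      -- multiply by kR * RC and use hθΦ
      have hfactor2 : RC * ((tR - 3*kR/4) * (RC * (tR - kR/4) - kR/2)) ≥ 0 := by
        apply mul_nonneg RC_pos.le
        apply mul_nonneg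
        · linarith
        · nlinarith [RC_lb]
      have hbracket : RC * kR * (kR - 1) + 2 * RC^2 * tR * sR * (kR - tR) +
          RC * kR * tR * sR + 3 ≤ 2 * kR^2 * sR := by
        nlinarith [hfactor2, RC_sq, hsR2, hk5R, htub, htlb, RC_lb, RC_ub,
          mul_nonneg (mul_nonneg RC_pos.le (by linarith : (0:ℝ) ≤ sR)) hfactor2,
          sq_nonneg (kR - 5), mul_nonneg (by linarith : (0:ℝ) ≤ sR - 2) (sq_nonneg kR),
          mul_nonneg (mul_nonneg (by linarith : (0:ℝ) ≤ sR)
            (by linarith : (0:ℝ) ≤ tR - 3*kR/4))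
            (by nlinarith [RC_lb] : (0:ℝ) ≤ RC * (tR - kR/4) - kR/2)]
      have hΦckR : RC * kR ≤ Φ := by rw [hkRdef]; exact hΦck
      -- final: (F.card) * RC < kR * sR * Φ
      have hmulk : kR * (2 * (F.card : ℝ)) ≤
          kR * (2 + (kR - 1) * Φ + (tR * sR) * Φ) + (tR * sR) * (2 * (kR - tR) * RC * Φ) := by
        have h1 : kR * ((tR * sR) * θ) = (tR * sR) * ((k:ℝ) * θ) := by
          rw [hkRdef]; ring
        have h2 : kR * (2 * (F.card : ℝ)) ≤ kR * (2 + (kR - 1) * Φ + (tR * sR) * θ +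
            (tR * sR) * Φ) := by
          apply mul_le_mul_of_nonneg_left hcomb (by linarith : (0:ℝ) ≤ kR)
        calc kR * (2 * (F.card : ℝ))
            ≤ kR * (2 + (kR - 1) * Φ + (tR * sR) * θ + (tR * sR) * Φ) := h2
          _ = kR * (2 + (kR - 1) * Φ + (tR * sR) * Φ) + kR * ((tR * sR) * θ) := by ring
          _ = kR * (2 + (kR - 1) * Φ + (tR * sR) * Φ) + (tR * sR) * ((k:ℝ) * θ) := by
              rw [h1]
          _ = kR * (2 + (kR - 1) * Φ + (tR * sR) * Φ) +
              (tR * sR) * (2 * ((k:ℝ) - t) * RC * Φ) := by rw [hθΦ]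
          _ = kR * (2 + (kR - 1) * Φ + (tR * sR) * Φ) +
              (tR * sR) * (2 * (kR - tR) * RC * Φ) := by rw [hkRdef, htRdef]
      have hfin : RC * (kR * (2 + (kR - 1) * Φ + (tR * sR) * Φ) +
          (tR * sR) * (2 * (kR - tR) * RC * Φ)) < kR * (2 * (kR * sR * Φ)) := by
        have hexp : RC * (kR * (2 + (kR - 1) * Φ + (tR * sR) * Φ) +
            (tR * sR) * (2 * (kR - tR) * RC * Φ)) =
            2 * RC * kR + (RC * kR * (kR - 1) + 2 * RC^2 * tR * sR * (kR - tR) +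
              RC * kR * tR * sR) * Φ := by ring
        rw [hexp]
        have h3 : (RC * kR * (kR - 1) + 2 * RC^2 * tR * sR * (kR - tR) +
            RC * kR * tR * sR) * Φ ≤ (2 * kR^2 * sR - 3) * Φ := by
          apply mul_le_mul_of_nonneg_right _ hΦpos.le
          linarith [hbracket]
        have h4 : 2 * RC * kR + (2 * kR^2 * sR - 3) * Φ < 2 * kR^2 * sR * Φ := by
          have h5 : 3 * Φ ≥ 3 * (RC * kR) := by linarith [hΦckR]
          nlinarith [hΦpos, RC_pos, hk5R]
        calc 2 * RC * kR + (RC * kR * (kR - 1) + 2 * RC^2 * tR * sR * (kR - tR) +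
            RC * kR * tR * sR) * Φ ≤ 2 * RC * kR + (2 * kR^2 * sR - 3) * Φ := by linarith
          _ < 2 * kR^2 * sR * Φ := h4
          _ = kR * (2 * (kR * sR * Φ)) := by ring
      -- conclude
      have hKpos : (0:ℝ) < 2 * kR := by linarith
      have : RC * (kR * (2 * (F.card : ℝ))) < kR * (2 * (kR * sR * Φ)) := by
        calc RC * (kR * (2 * (F.card : ℝ)))
            ≤ RC * (kR * (2 + (kR - 1) * Φ + (tR * sR) * Φ) +
              (tR * sR) * (2 * (kR - tR) * RC * Φ)) := by
              apply mul_le_mul_of_nonneg_left hmulk RC_pos.le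
          _ < kR * (2 * (kR * sR * Φ)) := hfin
      have hgoal : (F.card : ℝ) * RC < kR * sR * Φ := by nlinarith [this, hk5R]
      calc (F.card : ℝ) * RC < kR * sR * Φ := hgoal
        _ = (k:ℝ) * ((n:ℝ) + 2) * Φ := by rw [hkRdef, hsRdef]

end SunflowerAux

open SunflowerAux

/-- Statement I: any family `F` of sets of cardinality at most `s` with
`|F| ≥ (√10 − 2)² · (k/(√10 − 2))^s · s!` contains a sunflower of cardinality `k`. -/
theorem statement1 (α : Type*) [DecidableEq α] (k s : ℕ) (hk : 0 < k) (hs : 0 < s)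
    (F : Finset (Finset α)) (hcard : ∀ U ∈ F, U.card ≤ s)
    (hF : (Real.sqrt 10 - 2) ^ 2 * ((k : ℝ) / (Real.sqrt 10 - 2)) ^ s *
        (Nat.factorial s : ℝ) ≤ (F.card : ℝ)) :
    ∃ B ⊆ F, B.card = k ∧ IsSunflower B := by
  classical
  by_contra hcon
  have hTT : TT k s ≤ (F.card : ℝ) := by
    unfold TT RC
    exact hF
  rcases Nat.lt_or_ge k 3 with hk3 | hk3
  · -- k = 1 or k = 2
    interval_cases k
    · -- k = 1
      have hpos : (0:ℝ) < TT 1 s := TT_pos 1 s (by norm_num)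
      have hFpos : 0 < F.card := by
        by_contra h
        push_neg at h
        have : F.card = 0 := by omega
        rw [this] at hTT
        push_cast at hTT
        linarith
      obtain ⟨U, hU⟩ := Finset.card_pos.mp hFpos
      exact hcon ⟨{U}, Finset.singleton_subset_iff.mpr hU, Finset.card_singleton U,
        ∅, by
          intro U' hU' V' hV' hne
          rw [Finset.mem_singleton] at hU' hV'
          exact absurd (hU'.trans hV'.symm) hne⟩
    · -- k = 2
      have h2 : (2:ℝ) < TT 2 s := by
        obtain ⟨m, rfl⟩ := Nat.exists_eq_succ_of_ne_zero (by omega : s ≠ 0)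
        have := TT_ge 2 m (le_refl 2)
        have h2RC : (2:ℝ) < RC * 2 := by nlinarith [RC_lb]
        push_cast at this ⊢
        linarith
      have hF2 : 1 < F.card := by
        by_contra h
        push_neg at h
        have : (F.card : ℝ) ≤ 1 := by exact_mod_cast h
        linarith
      obtain ⟨U, hU, V, hV, hUV⟩ := Finset.one_lt_card.mp hF2
      refine hcon ⟨{U, V}, ?_, ?_, U ∩ V, ?_⟩
      · intro W hW
        rcases Finset.mem_insert.mp hW with rfl | hW
        · exact hU
        · rw [Finset.mem_singleton] at hW; subst hW; exact hV
      · rw [Finset.card_insert_of_notMem (Finset.notMem_singleton.mpr hUV),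
          Finset.card_singleton]
      · intro U' hU' V' hV' hne
        rcases Finset.mem_insert.mp hU' with rfl | hU'1 <;>
          rcases Finset.mem_insert.mp hV' with h2' | hV'1
        · exact absurd h2'.symm hne
        · rw [Finset.mem_singleton] at hV'1; subst hV'1; rfl
        · rw [Finset.mem_singleton] at hU'1; subst hU'1
          subst h2'
          exact Finset.inter_comm _ _
        · rw [Finset.mem_singleton] at hU'1 hV'1
          subst hU'1; subst hV'1
          exact absurd rfl hne
  · -- k ≥ 3
    have := main_bound k hk3 s F hcard hcon
    linarith
end

section
/- (Erdős–Rado sunflower lemma) For all positive integers s and k, every finite family F of finite sets, each of cardinality at most s, with |F| > (k − 1)^s · s! contains a sunflower of cardinality k. -/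
theorem sunflower_aux (s : ℕ) : ∀ {α : Type*} [DecidableEq α] (k : ℕ)
    (F : Finset (Finset α)), 0 < k → (∀ U ∈ F, U.card ≤ s) →
    (k - 1) ^ s * Nat.factorial s < F.card →
    ∃ B ⊆ F, B.card = k ∧ IsSunflower B := by
  induction s with
  | zero =>
    intro α _ k F hk hcard hF
    exfalso
    have h1 : F ⊆ {∅} := by
      intro U hU
      have : U = ∅ := Finset.card_eq_zero.mp (Nat.le_zero.mp (hcard U hU))
      simp [this]
    have := Finset.card_le_card h1
    simp at this hF
    omega
  | succ s ih =>
    intro α _ k F hk hcard hF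
    classical
    rcases eq_or_lt_of_le (show 1 ≤ k from hk) with h1 | hk2
    · -- k = 1 : any single member is a sunflower
      obtain ⟨U, hU⟩ := Finset.card_pos.mp (lt_of_le_of_lt (Nat.zero_le _) hF)
      exact ⟨{U}, by simpa using hU, by simp [← h1],
        ∅, by intro A hA B hB hAB; simp at hA hB; simp [hA, hB] at hAB⟩
    -- now 2 ≤ k
    set M := (k - 1) ^ s * Nat.factorial s with hM
    -- choose a maximum-cardinality pairwise disjoint subfamily D of F
    set T := F.powerset.filter (fun D => ∀ U ∈ D, ∀ V ∈ D, U ≠ V → U ∩ V = ∅) with hT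
    have hTne : T.Nonempty := ⟨∅, by simp [hT]⟩
    obtain ⟨D, hDT, hDmax⟩ := T.exists_max_image Finset.card hTne
    rw [hT, Finset.mem_filter, Finset.mem_powerset] at hDT
    obtain ⟨hDF, hDdisj⟩ := hDT
    by_cases hkD : k ≤ D.card
    · -- D is already a big pairwise-disjoint family: sunflower with core ∅
      obtain ⟨B, hBD, hBcard⟩ := Finset.exists_subset_card_eq hkD
      exact ⟨B, hBD.trans hDF, hBcard,
        ∅, fun U hU V hV hUV => hDdisj U (hBD hU) V (hBD hV) hUV⟩
    push_neg at hkD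
    -- maximality: every U ∈ F \ D meets some member of D
    have hmeet : ∀ U ∈ F, U ∉ D → ∃ V ∈ D, U ∩ V ≠ ∅ := by
      intro U hUF hUD
      by_contra h
      push_neg at h
      have hins : insert U D ∈ T := by
        rw [hT, Finset.mem_filter, Finset.mem_powerset]
        constructor
        · exact Finset.insert_subset hUF hDF
        · intro A hA B hB hAB
          rcases Finset.mem_insert.mp hA with hA' | hA' <;>
            rcases Finset.mem_insert.mp hB with hB' | hB'
          · exact absurd (hA'.trans hB'.symm) hAB
          · rw [hA']; exact h B hB'
          · rw [hB', Finset.inter_comm]; exact h A hA'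
          · exact hDdisj A hA' B hB' hAB
      have := hDmax _ hins
      rw [Finset.card_insert_of_notMem hUD] at this
      omega
    set W := D.biUnion id with hWdef
    have hsubW : ∀ V ∈ D, V ⊆ W := fun V hV => Finset.subset_biUnion_of_mem id hV
    -- every nonempty member of F meets W
    have hmeetW : ∀ U ∈ F, U ≠ ∅ → (U ∩ W).Nonempty := by
      intro U hUF hUne
      by_cases hUD : U ∈ D
      · obtain ⟨a, ha⟩ := Finset.nonempty_iff_ne_empty.mpr hUne
        exact ⟨a, Finset.mem_inter.mpr ⟨ha, hsubW U hUD ha⟩⟩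
      · obtain ⟨V, hVD, hUV⟩ := hmeet U hUF hUD
        obtain ⟨a, ha⟩ := Finset.nonempty_iff_ne_empty.mpr hUV
        rw [Finset.mem_inter] at ha
        exact ⟨a, Finset.mem_inter.mpr ⟨ha.1, hsubW V hVD ha.2⟩⟩
    -- the positivity of M
    have hMpos : 1 ≤ M := by
      rw [hM]
      exact Nat.one_le_iff_ne_zero.mpr (Nat.mul_ne_zero
        (pow_ne_zero _ (by omega)) (Nat.factorial_ne_zero s))
    -- counting: F \ {∅} is covered by the degree sets of elements of W
    have hcover : F.erase ∅ ⊆ W.biUnion (fun x => F.filter (fun U => x ∈ U)) := by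
      intro U hU
      rw [Finset.mem_erase] at hU
      obtain ⟨a, ha⟩ := hmeetW U hU.2 hU.1
      rw [Finset.mem_inter] at ha
      exact Finset.mem_biUnion.mpr ⟨a, ha.2, Finset.mem_filter.mpr ⟨hU.2, ha.1⟩⟩
    -- there exists x ∈ W with degree > M
    have hx : ∃ x ∈ W, M < (F.filter (fun U => x ∈ U)).card := by
      by_contra h
      push_neg at h
      have hsum : (F.erase ∅).card ≤ W.card * M := by
        calc (F.erase ∅).card ≤ (W.biUnion (fun x => F.filter (fun U => x ∈ U))).card :=
              Finset.card_le_card hcover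
          _ ≤ ∑ x ∈ W, (F.filter (fun U => x ∈ U)).card := Finset.card_biUnion_le
          _ ≤ W.card • M := Finset.sum_le_card_nsmul _ _ _ h
          _ = W.card * M := by rw [smul_eq_mul]
      have hfact : (k - 1) ^ (s + 1) * Nat.factorial (s + 1) = (k - 1) * (s + 1) * M := by
        rw [hM, pow_succ, Nat.factorial_succ]; ring
      by_cases hemp : ∅ ∈ F
      · -- ∅ ∈ F, hence ∅ ∈ D, and W uses only k-2 nonempty sets
        have hempD : ∅ ∈ D := by
          by_contra hempD
          have hins : insert ∅ D ∈ T := by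
            rw [hT, Finset.mem_filter, Finset.mem_powerset]
            refine ⟨Finset.insert_subset hemp hDF, ?_⟩
            intro A hA B hB hAB
            rcases Finset.mem_insert.mp hA with hA' | hA' <;>
              rcases Finset.mem_insert.mp hB with hB' | hB'
            · exact absurd (hA'.trans hB'.symm) hAB
            · rw [hA']; simp
            · rw [hB']; simp
            · exact hDdisj A hA' B hB' hAB
          have := hDmax _ hins
          rw [Finset.card_insert_of_notMem hempD] at this
          omega
        have hWalt : W = (D.erase ∅).biUnion id := by
          rw [hWdef, ← Finset.insert_erase hempD, Finset.biUnion_insert]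
          simp
        have hWcard : W.card ≤ (k - 2) * (s + 1) := by
          rw [hWalt]
          calc ((D.erase ∅).biUnion id).card ≤ ∑ V ∈ D.erase ∅, V.card :=
                Finset.card_biUnion_le
            _ ≤ (D.erase ∅).card * (s + 1) := by
                rw [← smul_eq_mul]
                exact Finset.sum_le_card_nsmul _ _ _
                  (fun V hV => hcard V (hDF (Finset.mem_of_mem_erase hV)))
            _ ≤ (k - 2) * (s + 1) := by
                have := Finset.card_erase_of_mem hempD
                have : (D.erase ∅).card ≤ k - 2 := by omega
                exact Nat.mul_le_mul_right _ this
        have hcount : (k - 1) * (s + 1) * M < F.card := by rw [← hfact]; exact hF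
        have hle : F.card - 1 ≤ (k - 2) * (s + 1) * M := by
          calc F.card - 1 = (F.erase ∅).card := (Finset.card_erase_of_mem hemp).symm
            _ ≤ W.card * M := hsum
            _ ≤ (k - 2) * (s + 1) * M := Nat.mul_le_mul_right _ hWcard
        have hsplit : (k - 1) * (s + 1) * M = (k - 2) * (s + 1) * M + (s + 1) * M := by
          have hk1 : k - 1 = (k - 2) + 1 := by omega
          rw [hk1]; ring
        have hApos : 1 ≤ (s + 1) * M := Nat.one_le_iff_ne_zero.mpr
          (Nat.mul_ne_zero (by omega) (by omega))
        omega
      · -- ∅ ∉ F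
        have hWcard : W.card ≤ (k - 1) * (s + 1) := by
          calc (D.biUnion id).card ≤ ∑ V ∈ D, V.card := Finset.card_biUnion_le
            _ ≤ D.card * (s + 1) := by
                rw [← smul_eq_mul]
                exact Finset.sum_le_card_nsmul _ _ _ (fun V hV => hcard V (hDF hV))
            _ ≤ (k - 1) * (s + 1) := Nat.mul_le_mul_right _ (by omega)
        have hFG : F.erase ∅ = F := Finset.erase_eq_of_notMem hemp
        rw [hFG] at hsum
        have : F.card ≤ (k - 1) * (s + 1) * M :=
          hsum.trans (Nat.mul_le_mul_right _ hWcard)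
        rw [← hfact] at this
        omega
    obtain ⟨x, _, hxdeg⟩ := hx
    -- the link of x
    set Fx := (F.filter (fun U => x ∈ U)).image (fun U => U.erase x) with hFx
    have hFxcard : M < Fx.card := by
      rw [hFx, Finset.card_image_of_injOn]
      · exact hxdeg
      · intro U hU V hV hUV
        rw [Finset.coe_filter, Set.mem_setOf_eq] at hU hV
        simp only at hUV
        rw [← Finset.insert_erase hU.2, hUV, Finset.insert_erase hV.2]
    have hFxsmall : ∀ V ∈ Fx, V.card ≤ s := by
      intro V hV
      rw [hFx, Finset.mem_image] at hV
      obtain ⟨U, hU, rfl⟩ := hV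
      rw [Finset.mem_filter] at hU
      rw [Finset.card_erase_of_mem hU.2]
      have := hcard U hU.1
      omega
    obtain ⟨B', hB'sub, hB'card, Y, hY⟩ := ih k Fx hk hFxsmall hFxcard
    have hB'x : ∀ V ∈ B', x ∉ V := by
      intro V hV
      have := hB'sub hV
      rw [hFx, Finset.mem_image] at this
      obtain ⟨U, _, rfl⟩ := this
      exact Finset.notMem_erase _ _
    refine ⟨B'.image (fun V => insert x V), ?_, ?_, insert x Y, ?_⟩
    · intro A hA
      rw [Finset.mem_image] at hA
      obtain ⟨V, hV, rfl⟩ := hA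
      have := hB'sub hV
      rw [hFx, Finset.mem_image] at this
      obtain ⟨U, hU, rfl⟩ := this
      rw [Finset.mem_filter] at hU
      rw [Finset.insert_erase hU.2]
      exact hU.1
    · rw [Finset.card_image_of_injOn, hB'card]
      intro V₁ hV₁ V₂ hV₂ h12
      have h1 : x ∉ V₁ := hB'x V₁ (Finset.mem_coe.mp hV₁)
      have h2 : x ∉ V₂ := hB'x V₂ (Finset.mem_coe.mp hV₂)
      simp only at h12
      rw [← Finset.erase_insert h1, h12, Finset.erase_insert h2]
    · intro A₁ hA₁ A₂ hA₂ hne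
      rw [Finset.mem_image] at hA₁ hA₂
      obtain ⟨V₁, hV₁, rfl⟩ := hA₁
      obtain ⟨V₂, hV₂, rfl⟩ := hA₂
      have hVne : V₁ ≠ V₂ := fun h => hne (by rw [h])
      have : insert x V₁ ∩ insert x V₂ = insert x (V₁ ∩ V₂) := by
        ext a; simp only [Finset.mem_inter, Finset.mem_insert]; tauto
      rw [this, hY V₁ hV₁ V₂ hV₂ hVne]

/-- The Erdős–Rado sunflower lemma: any family `F` of sets of cardinality at
most `s` with `|F| > (k − 1)^s · s!` contains a sunflower of cardinality `k`. -/
theorem statement3 (α : Type*) [DecidableEq α] (k s : ℕ) (hk : 0 < k) (hs : 0 < s)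
    (F : Finset (Finset α)) (hcard : ∀ U ∈ F, U.card ≤ s)
    (hF : (k - 1) ^ s * Nat.factorial s < F.card) :
    ∃ B ⊆ F, B.card = k ∧ IsSunflower B := by
  exact sunflower_aux s k F hk hcard hF
end

section
/- For every real ε with 0 < ε < 1/8 there exists a constant c > 0 such that for all integers s ≥ 2 and k ≥ 2, Φ₂(s) ≤ (c·k/ln(min(k, s)))^s · s!. -/
/-- `p_j`: equals `ε` for `j = 1` (and `j = 0`) and `ε · ln (min j k)` for `j ≥ 2`. -/
noncomputable def pstep (ε : ℝ) (k : ℕ) (j : ℕ) : ℝ :=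
  if j ≤ 1 then ε else ε * Real.log (min (j : ℝ) (k : ℝ))

/-- `Φ₂(s) = k^s · s! / (p₁ p₂ ⋯ p_s)`. -/
noncomputable def Phi2 (ε : ℝ) (k : ℕ) (s : ℕ) : ℝ :=
  ((k : ℝ) ^ s * (Nat.factorial s : ℝ)) / ∏ j ∈ Finset.Icc 1 s, pstep ε k j

lemma aux_log_le (j m : ℕ) (hj : 2 ≤ j) (hjm : j ≤ m) :
    (j : ℝ) * Real.log m ≤ 3 * m * Real.log j := by
  have hj0 : (0:ℝ) < j := by positivity
  have hjm' : (j:ℝ) ≤ m := by exact_mod_cast hjm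
  have hm0 : (0:ℝ) < m := lt_of_lt_of_le hj0 hjm'
  have hlog2 : (1:ℝ)/2 ≤ Real.log j := by
    have h2 : Real.log 2 ≤ Real.log j := by
      apply Real.log_le_log (by norm_num)
      exact_mod_cast hj
    nlinarith [Real.log_two_gt_d9]
  have hkey : Real.log m ≤ Real.log j + (m:ℝ)/j := by
    have h1 : Real.log ((m:ℝ)/j) ≤ (m:ℝ)/j - 1 :=
      Real.log_le_sub_one_of_pos (by positivity)
    have h2 : Real.log ((m:ℝ)/j) = Real.log m - Real.log j :=
      Real.log_div (ne_of_gt hm0) (ne_of_gt hj0)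
    nlinarith
  have hmul : (j:ℝ) * Real.log m ≤ (j:ℝ) * Real.log j + m := by
    have := mul_le_mul_of_nonneg_left hkey (le_of_lt hj0)
    have hfrac : (j:ℝ) * ((m:ℝ)/j) = m := by field_simp
    nlinarith
  nlinarith

lemma aux_pow_le_factorial (n : ℕ) :
    ((n:ℝ) + 1) ^ n ≤ 3 ^ n * (Nat.factorial n : ℝ) := by
  induction n with
  | zero => norm_num
  | succ n ih =>
    have hn0 : (0:ℝ) < (n:ℝ) + 1 := by positivity
    have h3 : ((n:ℝ) + 2) ^ (n+1) ≤ 3 * ((n:ℝ) + 1) ^ (n+1) := by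
      have heq : ((n:ℝ) + 2) = ((n:ℝ) + 1) * (1 + 1/((n:ℝ)+1)) := by field_simp; ring
      have hle : (1 + 1/((n:ℝ)+1)) ^ (n+1) ≤ 3 := by
        have h1 : (1 + 1/((n:ℝ)+1)) ≤ Real.exp (1/((n:ℝ)+1)) := by
          have := Real.add_one_le_exp (1/((n:ℝ)+1)); linarith
        have h2 : (1 + 1/((n:ℝ)+1)) ^ (n+1) ≤ (Real.exp (1/((n:ℝ)+1))) ^ (n+1) := by
          apply pow_le_pow_left₀ (by positivity) h1
        have h3 : (Real.exp (1/((n:ℝ)+1))) ^ (n+1) = Real.exp (((n:ℕ)+1) * (1/((n:ℝ)+1))) := by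
          rw [← Real.exp_nat_mul]
          push_cast
          ring_nf
        have h4 : ((n:ℕ)+1 : ℝ) * (1/((n:ℝ)+1)) = 1 := by
          push_cast; field_simp
        rw [h3] at h2
        have h5 : Real.exp (((n:ℕ)+1 : ℝ) * (1/((n:ℝ)+1))) = Real.exp 1 := by rw [h4]
        push_cast at h2 h5
        rw [h5] at h2
        have := Real.exp_one_lt_d9
        nlinarith
      calc ((n:ℝ) + 2) ^ (n+1) = ((n:ℝ) + 1) ^ (n+1) * (1 + 1/((n:ℝ)+1)) ^ (n+1) := by
            rw [heq, mul_pow]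
        _ ≤ ((n:ℝ) + 1) ^ (n+1) * 3 := by
            apply mul_le_mul_of_nonneg_left hle (by positivity)
        _ = 3 * ((n:ℝ) + 1) ^ (n+1) := by ring
    have hfac : (Nat.factorial (n+1) : ℝ) = ((n:ℝ)+1) * (Nat.factorial n : ℝ) := by
      rw [Nat.factorial_succ]; push_cast; ring
    push_cast
    calc ((n:ℝ) + 1 + 1) ^ (n+1) = ((n:ℝ) + 2) ^ (n+1) := by ring_nf
      _ ≤ 3 * ((n:ℝ) + 1) ^ (n+1) := h3
      _ = 3 * (((n:ℝ)+1) * ((n:ℝ)+1)^n) := by ring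
      _ ≤ 3 * (((n:ℝ)+1) * (3 ^ n * (Nat.factorial n : ℝ))) := by
          apply mul_le_mul_of_nonneg_left _ (by norm_num)
          apply mul_le_mul_of_nonneg_left ih (by positivity)
      _ = 3 ^ (n+1) * (Nat.factorial (n+1) : ℝ) := by rw [hfac]; ring

/-- For every `ε ∈ (0, 1/8)` there is a constant `c > 0` with
`Φ₂(s) ≤ (c·k / ln (min k s))^s · s!` for all `s ≥ 2` and `k ≥ 2`. -/
theorem statement4 (ε : ℝ) (hε0 : 0 < ε) (hε : ε < 1 / 8) :
    ∃ c : ℝ, 0 < c ∧ ∀ s k : ℕ, 2 ≤ s → 2 ≤ k →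
      Phi2 ε k s ≤ (c * (k : ℝ) / Real.log (min (k : ℝ) (s : ℝ))) ^ s *
        (Nat.factorial s : ℝ) := by
  refine ⟨9 / ε, by positivity, ?_⟩
  intro s k hs hk
  set m : ℕ := min k s with hm
  have hm2 : 2 ≤ m := le_min hk hs
  have hms : m ≤ s := min_le_right k s
  have hmk : m ≤ k := min_le_left k s
  have hm0 : (0:ℝ) < m := by positivity
  have hLpos : 0 < Real.log m := by
    apply Real.log_pos
    exact_mod_cast lt_of_lt_of_le one_lt_two hm2
  -- the per-term lower bound
  have hterm : ∀ j ∈ Finset.Icc 1 s,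
      ε * Real.log m / (3 * m) * ((min j m : ℕ) : ℝ) ≤ pstep ε k j := by
    intro j hj
    simp only [Finset.mem_Icc] at hj
    obtain ⟨hj1, hjs⟩ := hj
    by_cases hj2 : j ≤ 1
    · -- j = 1
      have hj1' : j = 1 := le_antisymm hj2 hj1
      subst hj1'
      simp only [pstep, if_pos (le_refl 1)]
      have : min 1 m = 1 := by omega
      rw [this]
      have hlogm : Real.log m ≤ (m:ℝ) := by
        have := Real.log_le_sub_one_of_pos hm0
        linarith
      rw [div_mul_eq_mul_div, div_le_iff₀ (by positivity)]
      push_cast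
      nlinarith [mul_le_mul_of_nonneg_left hlogm hε0.le, mul_nonneg hε0.le hm0.le]
    · push_neg at hj2
      have hj2' : 2 ≤ j := hj2
      simp only [pstep, if_neg (by omega : ¬ j ≤ 1)]
      by_cases hjm : m ≤ j
      · -- min j m = m
        have h1 : min j m = m := min_eq_right hjm
        rw [h1]
        have hmin : (m:ℝ) ≤ min (j:ℝ) (k:ℝ) := by
          apply le_min
          · exact_mod_cast hjm
          · exact_mod_cast hmk
        have hlog : Real.log m ≤ Real.log (min (j:ℝ) (k:ℝ)) :=
          Real.log_le_log hm0 hmin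
        rw [div_mul_eq_mul_div, div_le_iff₀ (by positivity)]
        have hmul := mul_le_mul_of_nonneg_left hlog (by positivity : (0:ℝ) ≤ ε * m)
        nlinarith [mul_nonneg (mul_nonneg hε0.le hm0.le) (le_trans hLpos.le hlog)]
      · -- j < m, min j m = j, min j k = j
        push_neg at hjm
        have h1 : min j m = j := min_eq_left (le_of_lt hjm)
        rw [h1]
        have hjk : (j:ℝ) ≤ (k:ℝ) := by
          exact_mod_cast le_trans (le_of_lt hjm) hmk
        have hminjk : min (j:ℝ) (k:ℝ) = (j:ℝ) := min_eq_left hjk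
        rw [hminjk]
        have hkey := aux_log_le j m hj2' (le_of_lt hjm)
        rw [div_mul_eq_mul_div, div_le_iff₀ (by positivity)]
        nlinarith [mul_le_mul_of_nonneg_left hkey hε0.le]
  -- nonnegativity of lhs terms
  have hnonneg : ∀ j ∈ Finset.Icc 1 s,
      0 ≤ ε * Real.log m / (3 * m) * ((min j m : ℕ) : ℝ) := by
    intro j _
    positivity
  have hprodle : ∏ j ∈ Finset.Icc 1 s, (ε * Real.log m / (3 * m) * ((min j m : ℕ) : ℝ))
      ≤ ∏ j ∈ Finset.Icc 1 s, pstep ε k j :=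
    Finset.prod_le_prod hnonneg hterm
  -- compute the lhs product
  have hcard : (Finset.Icc 1 s).card = s := by
    rw [Nat.card_Icc]
    omega
  have hsplit : ∏ j ∈ Finset.Icc 1 s, (ε * Real.log m / (3 * m) * ((min j m : ℕ) : ℝ))
      = (ε * Real.log m / (3 * m)) ^ s * ∏ j ∈ Finset.Icc 1 s, ((min j m : ℕ) : ℝ) := by
    rw [Finset.prod_mul_distrib, Finset.prod_const, hcard]
  -- compute nat product
  have hP : ∏ j ∈ Finset.Icc 1 s, min j m = Nat.factorial (m-1) * m ^ (s - m + 1) := by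
    have hIcc : Finset.Icc 1 s = Finset.Ioc 0 s := by
      ext x; simp [Nat.lt_iff_add_one_le]
    have hIcc1 : Finset.Icc 1 (m-1) = Finset.Ioc 0 (m-1) := by
      ext x; simp [Nat.lt_iff_add_one_le]
    have hsplit2 : (∏ j ∈ Finset.Ioc 0 (m-1), min j m) * (∏ j ∈ Finset.Ioc (m-1) s, min j m)
        = ∏ j ∈ Finset.Ioc 0 s, min j m :=
      Finset.prod_Ioc_consecutive _ (Nat.zero_le _) (le_trans (Nat.sub_le m 1) hms)
    rw [hIcc, ← hsplit2]
    have h1 : ∏ j ∈ Finset.Ioc 0 (m-1), min j m = Nat.factorial (m-1) := by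
      have hset : Finset.Ioc 0 (m-1) = Finset.Ico 1 ((m-1)+1) := by
        ext x; simp [Nat.lt_succ_iff, Nat.lt_iff_add_one_le]
      rw [hset, Finset.prod_congr rfl (fun j hj => ?_),
        Finset.prod_Ico_id_eq_factorial]
      simp only [Finset.mem_Ico] at hj
      exact min_eq_left (by omega)
    have h2 : ∏ j ∈ Finset.Ioc (m-1) s, min j m = m ^ (s - m + 1) := by
      rw [Finset.prod_congr rfl (fun j hj => ?_), Finset.prod_const]
      · rw [Nat.card_Ioc]
        congr 1
        omega
      · simp only [Finset.mem_Ioc] at hj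
        exact min_eq_right (by omega)
    rw [h1, h2]
  -- lower bound on nat product: m^s ≤ 3^s * P
  have hPbound : (m:ℝ) ^ s ≤ 3 ^ s * ((∏ j ∈ Finset.Icc 1 s, min j m : ℕ) : ℝ) := by
    rw [hP]
    push_cast
    have hdecomp : (m:ℝ) ^ s = (m:ℝ) ^ (m-1) * (m:ℝ) ^ (s - m + 1) := by
      rw [← pow_add]
      congr 1
      omega
    have hfac : (m:ℝ) ^ (m-1) ≤ 3 ^ (m-1) * (Nat.factorial (m-1) : ℝ) := by
      have := aux_pow_le_factorial (m-1)
      have hcast : ((m-1 : ℕ):ℝ) + 1 = (m:ℝ) := by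
        have : m - 1 + 1 = m := by omega
        push_cast [this]
        exact_mod_cast congrArg (Nat.cast : ℕ → ℝ) this
      rwa [hcast] at this
    have h3pow : (3:ℝ) ^ (m-1) ≤ 3 ^ s := by
      apply pow_le_pow_right₀ (by norm_num)
      omega
    rw [hdecomp]
    have hfacnonneg : (0:ℝ) ≤ (Nat.factorial (m-1) : ℝ) := by positivity
    have hmpow : (0:ℝ) ≤ (m:ℝ) ^ (s - m + 1) := by positivity
    calc (m:ℝ) ^ (m-1) * (m:ℝ) ^ (s-m+1)
        ≤ (3 ^ (m-1) * (Nat.factorial (m-1) : ℝ)) * (m:ℝ) ^ (s-m+1) := by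
          apply mul_le_mul_of_nonneg_right hfac hmpow
      _ ≤ (3 ^ s * (Nat.factorial (m-1) : ℝ)) * (m:ℝ) ^ (s-m+1) := by
          apply mul_le_mul_of_nonneg_right _ hmpow
          apply mul_le_mul_of_nonneg_right h3pow hfacnonneg
      _ = 3 ^ s * ((Nat.factorial (m-1) : ℝ) * (m:ℝ) ^ (s-m+1)) := by ring
  -- combine: product of psteps ≥ (ε log m / 9)^s
  have hfinal : (ε * Real.log m / 9) ^ s ≤ ∏ j ∈ Finset.Icc 1 s, pstep ε k j := by
    have hA : (ε * Real.log m / 9) ^ s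
        ≤ (ε * Real.log m / (3 * m)) ^ s * ((∏ j ∈ Finset.Icc 1 s, min j m : ℕ) : ℝ) := by
      have heq : (ε * Real.log m / 9 : ℝ) ^ s
          = (ε * Real.log m / (3 * m)) ^ s * ((m:ℝ)^s / 3^s) := by
        have h1 : (3*(m:ℝ))^s = 3^s * (m:ℝ)^s := mul_pow _ _ _
        have h2 : ((9:ℝ))^s = 3^s * 3^s := by rw [← mul_pow]; norm_num
        rw [div_pow, div_pow, h1, h2]
        have h3 : ((3:ℝ))^s ≠ 0 := by positivity
        have h4 : ((m:ℝ))^s ≠ 0 := by positivity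
        field_simp
      rw [heq]
      have h1 : (m:ℝ)^s / 3^s ≤ ((∏ j ∈ Finset.Icc 1 s, min j m : ℕ) : ℝ) := by
        rw [div_le_iff₀ (by positivity)]
        linarith [hPbound]
      apply mul_le_mul_of_nonneg_left h1 (by positivity)
    calc (ε * Real.log m / 9) ^ s
        ≤ (ε * Real.log m / (3 * m)) ^ s * ((∏ j ∈ Finset.Icc 1 s, min j m : ℕ) : ℝ) := hA
      _ = ∏ j ∈ Finset.Icc 1 s, (ε * Real.log m / (3 * m) * ((min j m : ℕ) : ℝ)) := by
          rw [hsplit]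
          congr 1
          push_cast
          rfl
      _ ≤ ∏ j ∈ Finset.Icc 1 s, pstep ε k j := hprodle
  -- finish
  have hbase : (0:ℝ) < ε * Real.log m / 9 := by positivity
  have hdenom : (0:ℝ) < (ε * Real.log m / 9) ^ s := by positivity
  have hprodpos : (0:ℝ) < ∏ j ∈ Finset.Icc 1 s, pstep ε k j := lt_of_lt_of_le hdenom hfinal
  have hlogeq : Real.log (min (k:ℝ) (s:ℝ)) = Real.log m := by
    congr 1
    simp [hm, Nat.cast_min]
  rw [Phi2, hlogeq]
  have hnum : (0:ℝ) ≤ (k:ℝ)^s * (Nat.factorial s : ℝ) := by positivity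
  calc ((k:ℝ)^s * (Nat.factorial s : ℝ)) / ∏ j ∈ Finset.Icc 1 s, pstep ε k j
      ≤ ((k:ℝ)^s * (Nat.factorial s : ℝ)) / (ε * Real.log m / 9) ^ s := by
        apply div_le_div_of_nonneg_left hnum hdenom hfinal
    _ = (9 / ε * (k:ℝ) / Real.log m) ^ s * (Nat.factorial s : ℝ) := by
        have hεne : ε ≠ 0 := ne_of_gt hε0
        have hLne : Real.log m ≠ 0 := ne_of_gt hLpos
        have key : 9 / ε * (k:ℝ) / Real.log m = (k:ℝ) / (ε * Real.log m / 9) := by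
          field_simp
        rw [key, div_pow]
        simp only [div_pow, div_eq_mul_inv, mul_inv, inv_inv, mul_pow]
        ring
end

section
/- For every real ε with 0 < ε < 1/8, every integer k ≥ 2, every integer s ≥ 2, and every positive integer j < s: Φ₂(s) > Φ₂(s − j) · exp(j·ln(k·s/p_s) − j²/s − 1). -/
lemma pstep_pos (ε : ℝ) (hε0 : 0 < ε) (k : ℕ) (hk : 2 ≤ k) (i : ℕ) :
    0 < pstep ε k i := by
  unfold pstep
  split
  · exact hε0
  · next h =>
    have hi : 2 ≤ i := by omega
    refine mul_pos hε0 (Real.log_pos ?_)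
    have h1 : (2:ℝ) ≤ (i:ℝ) := by exact_mod_cast hi
    have h2 : (2:ℝ) ≤ (k:ℝ) := by exact_mod_cast hk
    have := le_min h1 h2
    linarith

lemma pstep_mono (ε : ℝ) (hε0 : 0 < ε) (k : ℕ) (hk : 2 ≤ k) (i s : ℕ) (hi : 2 ≤ i) (his : i ≤ s) :
    pstep ε k i ≤ pstep ε k s := by
  unfold pstep
  rw [if_neg (by omega), if_neg (by omega)]
  refine mul_le_mul_of_nonneg_left (Real.log_le_log ?_ ?_) hε0.le
  · have h1 : (2:ℝ) ≤ (i:ℝ) := by exact_mod_cast hi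
    have : (0:ℝ) < (i:ℝ) := by linarith
    have hk0 : 0 < k := by omega
    have h3 : (0:ℝ) < (k:ℝ) := by exact_mod_cast hk0
    exact lt_min this h3
  · exact min_le_min (by exact_mod_cast his) le_rfl

lemma log_ge_one_sub_inv (x : ℝ) (hx : 0 < x) : 1 - 1/x ≤ Real.log x := by
  have h := Real.log_le_sub_one_of_pos (show (0:ℝ) < x⁻¹ by positivity)
  rw [Real.log_inv] at h
  have hx' : 1/x = x⁻¹ := one_div x
  rw [hx']
  linarith

lemma step_ineq (b : ℝ) (hb : 1 ≤ b) :
    (b+1) * Real.log (b+1) ≤ b * Real.log b + Real.log (b+1) + 1 := by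
  have hb0 : 0 < b := by linarith
  have h1 : Real.log ((b+1)/b) ≤ (b+1)/b - 1 :=
    Real.log_le_sub_one_of_pos (by positivity)
  rw [Real.log_div (by linarith) (ne_of_gt hb0)] at h1
  have h2 : (b+1)/b - 1 = 1/b := by field_simp; ring
  rw [h2] at h1
  have h3 : b * (Real.log (b+1) - Real.log b) ≤ b * (1/b) :=
    mul_le_mul_of_nonneg_left h1 hb0.le
  have h4 : b * (1/b) = 1 := by field_simp
  nlinarith [h3]

lemma sum_log_ge (a : ℕ) (ha : 1 ≤ a) (j : ℕ) :
    ((a + j : ℕ) : ℝ) * Real.log ((a + j : ℕ)) - (a:ℝ) * Real.log a - j ≤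
      ∑ i ∈ Finset.Ioc a (a + j), Real.log i := by
  induction j with
  | zero => simp
  | succ n ih =>
    rw [show a + (n+1) = (a + n) + 1 from rfl,
      Finset.sum_Ioc_succ_top (by omega : a ≤ a + n)]
    have hb : (1:ℝ) ≤ ((a + n : ℕ) : ℝ) := by exact_mod_cast (by omega : 1 ≤ a + n)
    have hstep := step_ineq ((a + n : ℕ) : ℝ) hb
    have hc : (((a + n) + 1 : ℕ) : ℝ) = ((a + n : ℕ) : ℝ) + 1 := by push_cast; ring
    rw [hc]
    push_cast
    push_cast at ih hstep
    linarith

lemma cast_factorial_eq_prod (n : ℕ) :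
    (Nat.factorial n : ℝ) = ∏ i ∈ Finset.Ioc 0 n, (i:ℝ) := by
  induction n with
  | zero => simp
  | succ m ih =>
    rw [Finset.prod_Ioc_succ_top (Nat.zero_le _), ← ih]
    push_cast [Nat.factorial_succ]
    ring

lemma phi2_pos (ε : ℝ) (hε0 : 0 < ε) (k : ℕ) (hk : 2 ≤ k) (n : ℕ) :
    0 < Phi2 ε k n := by
  unfold Phi2
  have hk0 : (0:ℝ) < k := by exact_mod_cast (by omega : 0 < k)
  have hf : (0:ℝ) < (Nat.factorial n : ℝ) := by exact_mod_cast Nat.factorial_pos n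
  have hp : 0 < ∏ j ∈ Finset.Icc 1 n, pstep ε k j :=
    Finset.prod_pos fun i _ => pstep_pos ε hε0 k hk i
  positivity

lemma log_Phi2 (ε : ℝ) (hε0 : 0 < ε) (k : ℕ) (hk : 2 ≤ k) (n : ℕ) :
    Real.log (Phi2 ε k n) =
      (n:ℝ) * Real.log k + ∑ i ∈ Finset.Ioc 0 n, (Real.log i - Real.log (pstep ε k i)) := by
  have hk0 : (0:ℝ) < k := by exact_mod_cast (by omega : 0 < k)
  have hf : (0:ℝ) < (Nat.factorial n : ℝ) := by exact_mod_cast Nat.factorial_pos n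
  have hp : 0 < ∏ j ∈ Finset.Icc 1 n, pstep ε k j :=
    Finset.prod_pos fun i _ => pstep_pos ε hε0 k hk i
  have hIcc : Finset.Icc 1 n = Finset.Ioc 0 n := by
    ext i; simp [Nat.lt_iff_add_one_le]
  have hfac : (Nat.factorial n : ℝ) = ∏ i ∈ Finset.Ioc 0 n, (i:ℝ) :=
    cast_factorial_eq_prod n
  unfold Phi2
  rw [hIcc, Real.log_div (by positivity) (by rw [← hIcc]; exact ne_of_gt hp),
    Real.log_mul (by positivity) (ne_of_gt hf), Real.log_pow, hfac,
    Real.log_prod (s := Finset.Ioc 0 n) (f := fun i : ℕ => (i:ℝ)) (fun i hi => by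
      have : 0 < i := (Finset.mem_Ioc.mp hi).1
      exact Nat.cast_ne_zero.mpr (by omega)),
    Real.log_prod (s := Finset.Ioc 0 n) (f := pstep ε k) (fun i _ => ne_of_gt (pstep_pos ε hε0 k hk i)),
    Finset.sum_sub_distrib]
  ring

/-- `Φ₂(s) > Φ₂(s − j) · exp(j·ln(k·s/p_s) − j²/s − 1)` for `0 < j < s`. -/
theorem statement5 (ε : ℝ) (hε0 : 0 < ε) (hε : ε < 1 / 8) (k : ℕ) (hk : 2 ≤ k)
    (s : ℕ) (hs : 2 ≤ s) (j : ℕ) (hj : 0 < j) (hjs : j < s) :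
    Phi2 ε k (s - j) *
        Real.exp ((j : ℝ) * Real.log ((k : ℝ) * (s : ℝ) / pstep ε k s)
          - (j : ℝ) ^ 2 / (s : ℝ) - 1) <
      Phi2 ε k s := by
  set a := s - j with ha_def
  have ha1 : 1 ≤ a := by omega
  have hsa : s = a + j := by omega
  have hcast : (s:ℝ) = (a:ℝ) + (j:ℝ) := by exact_mod_cast hsa
  have hk0 : (0:ℝ) < (k:ℝ) := by exact_mod_cast (show 0 < k by omega)
  have hs0 : (0:ℝ) < (s:ℝ) := by exact_mod_cast (show 0 < s by omega)
  have ha0 : (0:ℝ) < (a:ℝ) := by exact_mod_cast (show 0 < a by omega)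
  have hps : 0 < pstep ε k s := pstep_pos ε hε0 k hk s
  have hPa := phi2_pos ε hε0 k hk a
  have hPs := phi2_pos ε hε0 k hk s
  rw [← Real.exp_log hPa, ← Real.exp_add, ← Real.exp_log hPs]
  apply Real.exp_lt_exp.mpr
  rw [log_Phi2 ε hε0 k hk a, log_Phi2 ε hε0 k hk s]
  have hsplit : ∑ i ∈ Finset.Ioc 0 s, (Real.log i - Real.log (pstep ε k i)) =
      (∑ i ∈ Finset.Ioc 0 a, (Real.log i - Real.log (pstep ε k i))) +
      ∑ i ∈ Finset.Ioc a s, (Real.log i - Real.log (pstep ε k i)) :=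
    (Finset.sum_Ioc_consecutive _ (Nat.zero_le a) (by omega)).symm
  rw [hsplit]
  have hlog : Real.log ((k:ℝ) * (s:ℝ) / pstep ε k s) =
      Real.log k + Real.log s - Real.log (pstep ε k s) := by
    rw [Real.log_div (by positivity) (ne_of_gt hps),
      Real.log_mul (ne_of_gt hk0) (ne_of_gt hs0)]
  rw [hlog]
  -- key inequalities
  have f1 : (∑ i ∈ Finset.Ioc a s, Real.log i) - (j:ℝ) * Real.log (pstep ε k s) ≤
      ∑ i ∈ Finset.Ioc a s, (Real.log i - Real.log (pstep ε k i)) := by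
    have h1 : ∑ i ∈ Finset.Ioc a s, (Real.log i - Real.log (pstep ε k s)) ≤
        ∑ i ∈ Finset.Ioc a s, (Real.log i - Real.log (pstep ε k i)) := by
      refine Finset.sum_le_sum fun i hi => ?_
      have hmem := Finset.mem_Ioc.mp hi
      have : pstep ε k i ≤ pstep ε k s :=
        pstep_mono ε hε0 k hk i s (by omega) hmem.2
      have := Real.log_le_log (pstep_pos ε hε0 k hk i) this
      linarith
    have h2 : ∑ i ∈ Finset.Ioc a s, (Real.log i - Real.log (pstep ε k s)) =
        (∑ i ∈ Finset.Ioc a s, Real.log i) - (j:ℝ) * Real.log (pstep ε k s) := by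
      rw [Finset.sum_sub_distrib, Finset.sum_const, Nat.card_Ioc]
      rw [show s - a = j by omega]
      ring
    linarith
  have f2 : (s:ℝ) * Real.log s - (a:ℝ) * Real.log a - (j:ℝ) ≤
      ∑ i ∈ Finset.Ioc a s, Real.log i := by
    have := sum_log_ge a ha1 j
    rw [← hsa] at this
    exact this
  have f3 : (j:ℝ) - (j:ℝ)^2 / (s:ℝ) ≤ (a:ℝ) * (Real.log s - Real.log a) := by
    have hlsa : 1 - (a:ℝ)/(s:ℝ) ≤ Real.log s - Real.log a := by
      have h := log_ge_one_sub_inv ((s:ℝ)/(a:ℝ)) (by positivity)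
      rw [Real.log_div (ne_of_gt hs0) (ne_of_gt ha0)] at h
      have : 1 / ((s:ℝ)/(a:ℝ)) = (a:ℝ)/(s:ℝ) := by field_simp
      rw [this] at h
      exact h
    have h5 : (a:ℝ) * (1 - (a:ℝ)/(s:ℝ)) ≤ (a:ℝ) * (Real.log s - Real.log a) :=
      mul_le_mul_of_nonneg_left hlsa ha0.le
    have key : (a:ℝ) * (1 - (a:ℝ)/(s:ℝ)) = (j:ℝ) - (j:ℝ)^2 / (s:ℝ) := by
      rw [hcast]
      field_simp
      ring
    linarith
  have f4 : (s:ℝ) * Real.log k = (a:ℝ) * Real.log k + (j:ℝ) * Real.log k := by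
    rw [hcast]; ring
  have f5 : (s:ℝ) * Real.log s = (a:ℝ) * Real.log s + (j:ℝ) * Real.log s := by
    rw [hcast]; ring
  linarith
end

section
/- For every integer s ≥ 3, the product ln 2 · ln 3 ⋯ ln s (the product of ln i over integers i from 2 to s) is at least (ln s / e²)^s, where e is the base of the natural logarithm. -/
open Real Finset

/-- For every integer `s ≥ 3`, `ln 2 · ln 3 ⋯ ln s ≥ (ln s / e²)^s`. -/
theorem statement6 (s : ℕ) (hs : 3 ≤ s) :
    (Real.log (s : ℝ) / Real.exp 2) ^ s ≤ ∏ i ∈ Finset.Icc 2 s, Real.log (i : ℝ) := by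
  have he3 : Real.exp 1 ≤ 3 := le_of_lt (by
    calc Real.exp 1 < 2.7182818286 := Real.exp_one_lt_d9
    _ ≤ 3 := by norm_num)
  rcases eq_or_lt_of_le hs with h3 | h4
  · -- s = 3
    subst h3
    rw [show Finset.Icc 2 3 = {2, 3} by decide, Finset.prod_insert (by decide),
      Finset.prod_singleton]
    have h2 : (0.6931471803 : ℝ) < Real.log 2 := Real.log_two_gt_d9
    have h3p : (0:ℝ) < Real.log 3 := Real.log_pos (by norm_num)
    have heo : (2.7182818283:ℝ) < Real.exp 1 := Real.exp_one_gt_d9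
    have he2 : (7:ℝ) < Real.exp 2 := by
      rw [show (2:ℝ) = 1 + 1 by norm_num, Real.exp_add]
      nlinarith
    have ha0 : 0 ≤ Real.log 3 / Real.exp 2 := by positivity
    have ha1 : Real.log 3 / Real.exp 2 ≤ 1 := by
      rw [div_le_one (by positivity)]
      linarith [Real.log_le_sub_one_of_pos (show (0:ℝ) < 3 by norm_num)]
    calc (Real.log ((3:ℕ):ℝ) / Real.exp 2) ^ 3 ≤ (Real.log ((3:ℕ):ℝ) / Real.exp 2) ^ 1 := by
          push_cast
          exact pow_le_pow_of_le_one ha0 ha1 (by norm_num)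
      _ ≤ Real.log 2 * Real.log 3 := by
          push_cast
          rw [pow_one, div_le_iff₀ (by positivity)]
          have hh : (1:ℝ) ≤ Real.log 2 * Real.exp 2 := by nlinarith
          calc Real.log 3 = Real.log 3 * 1 := by ring
            _ ≤ Real.log 3 * (Real.log 2 * Real.exp 2) :=
                mul_le_mul_of_nonneg_left hh h3p.le
            _ = Real.log 2 * Real.log 3 * Real.exp 2 := by ring
      _ = Real.log ((2:ℕ):ℝ) * Real.log ((3:ℕ):ℝ) := by push_cast; ring
  · -- s ≥ 4
    have hs4 : 4 ≤ s := h4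
    have hs4' : (4:ℝ) ≤ s := by exact_mod_cast hs4
    have hs0 : (0:ℝ) < s := by linarith
    have hes : Real.exp 1 ≤ (s:ℝ) := by linarith
    have hL : 0 < Real.log s := Real.log_pos (by linarith)
    have hkey : ∀ i ∈ Finset.Icc 2 s, (i:ℝ)/s * Real.log s ≤ Real.log i := by
      intro i hi
      rw [Finset.mem_Icc] at hi
      obtain ⟨h2i, his⟩ := hi
      have hi0 : (0:ℝ) < i := by
        have : (2:ℝ) ≤ i := by exact_mod_cast h2i
        linarith
      have hmono : Real.log s / s ≤ Real.log i / i := by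
        rcases eq_or_lt_of_le h2i with rfl | h3i
        · have h42 : Real.log ((2:ℕ):ℝ) / ((2:ℕ):ℝ) = Real.log 4 / 4 := by
            rw [show (4:ℝ) = 2^2 by norm_num, Real.log_pow]
            push_cast; ring
          rw [h42]
          exact Real.log_div_self_antitoneOn (by simpa using (by linarith : Real.exp 1 ≤ (4:ℝ)))
            (by simpa using hes) hs4'
        · have h3i' : (3:ℝ) ≤ i := by exact_mod_cast h3i
          have his' : (i:ℝ) ≤ s := by exact_mod_cast his
          exact Real.log_div_self_antitoneOn (by simpa using (by linarith : Real.exp 1 ≤ (i:ℝ)))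
            (by simpa using hes) his'
      calc (i:ℝ)/s * Real.log s = (i:ℝ) * (Real.log s / s) := by ring
        _ ≤ (i:ℝ) * (Real.log i / i) := mul_le_mul_of_nonneg_left hmono hi0.le
        _ = Real.log i := by field_simp
    have hnn : ∀ i ∈ Finset.Icc 2 s, 0 ≤ (i:ℝ)/s * Real.log s := by
      intro i hi
      positivity
    have hprod : ∏ i ∈ Finset.Icc 2 s, ((i:ℝ)/s * Real.log s)
        ≤ ∏ i ∈ Finset.Icc 2 s, Real.log (i:ℝ) :=
      Finset.prod_le_prod hnn hkey
    have hcard : (Finset.Icc 2 s).card = s - 1 := by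
      rw [Nat.card_Icc]; omega
    have hfact : ∏ i ∈ Finset.Icc 2 s, (i:ℝ) = (s.factorial : ℝ) := by
      rw [← Nat.cast_prod]
      congr 1
      have h1 : Finset.Icc 1 s = insert 1 (Finset.Icc 2 s) := by
        ext x
        simp [Finset.mem_Icc]
        omega
      have haux : ∀ m : ℕ, ∏ i ∈ Finset.Icc 1 m, i = m.factorial := by
        intro m
        induction m with
        | zero => simp
        | succ k ih =>
          rw [Finset.prod_Icc_succ_top (by omega), ih, Nat.factorial_succ, mul_comm]
      have := haux s
      rw [h1, Finset.prod_insert (by simp), one_mul] at this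
      exact this
    have hcompute : ∏ i ∈ Finset.Icc 2 s, ((i:ℝ)/s * Real.log s)
        = (s.factorial : ℝ) / (s:ℝ)^(s-1) * (Real.log s)^(s-1) := by
      rw [Finset.prod_mul_distrib, Finset.prod_div_distrib, Finset.prod_const, Finset.prod_const,
        hcard, hfact]
    have hfb : (s:ℝ)^s ≤ (s.factorial : ℝ) * Real.exp s := by
      have h := Real.pow_div_factorial_le_exp (x := (s:ℝ)) hs0.le s
      rw [div_le_iff₀ (by positivity)] at h
      linarith
    have hlogle : Real.log s ≤ (s:ℝ) := by
      linarith [Real.log_le_sub_one_of_pos hs0]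
    obtain ⟨n, rfl⟩ : ∃ n, s = n + 1 := ⟨s - 1, by omega⟩
    have hn : (n + 1) - 1 = n := by omega
    rw [hn] at hcompute
    refine le_trans ?_ hprod
    rw [hcompute]
    push_cast at hL hlogle hfb ⊢
    set L := Real.log ((n:ℝ) + 1) with hLdef
    have hq : ((n:ℝ)+1)/Real.exp ((n:ℝ)+1) ≤ ((n+1).factorial : ℝ)/((n:ℝ)+1)^n := by
      rw [div_le_div_iff₀ (by positivity) (by positivity)]
      calc ((n:ℝ)+1) * ((n:ℝ)+1)^n = ((n:ℝ)+1)^(n+1) := by rw [pow_succ]; ring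
        _ ≤ ((n+1).factorial : ℝ) * Real.exp ((n:ℝ)+1) := hfb
        _ = ((n+1).factorial : ℝ) * Real.exp ((n:ℝ)+1) := rfl
    have hexpmono : Real.exp ((n:ℝ)+1) ≤ Real.exp 2 ^ (n+1) := by
      rw [← Real.exp_nat_mul]
      apply Real.exp_le_exp.2
      push_cast
      nlinarith [Nat.cast_nonneg (α := ℝ) n]
    calc (L / Real.exp 2) ^ (n+1) = L^n * (L / Real.exp 2 ^ (n+1)) := by
          rw [div_pow, pow_succ]
          field_simp
      _ ≤ L^n * (((n:ℝ)+1) / Real.exp ((n:ℝ)+1)) := by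
          apply mul_le_mul_of_nonneg_left _ (pow_nonneg hL.le n)
          exact div_le_div₀ (by positivity) hlogle (Real.exp_pos _) hexpmono
      _ ≤ L^n * (((n+1).factorial : ℝ)/((n:ℝ)+1)^n) :=
          mul_le_mul_of_nonneg_left hq (pow_nonneg hL.le n)
      _ = ((n+1).factorial : ℝ)/((n:ℝ)+1)^n * L^n := by ring
end

section
/- For all integers s and j with 1 ≤ j < s: s!/(s − j)! > exp(j·ln s − j²/s − 1); equivalently, s!/(s − j)! > s^j · e^{−j²/s − 1}. -/
open Finset

noncomputable def fAux (k : ℕ) : ℝ := (k : ℝ) * Real.log k - k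

lemma stepA (k : ℕ) : fAux (k + 1) - fAux k ≤ Real.log ((k : ℝ) + 1) := by
  unfold fAux
  push_cast
  rcases Nat.eq_zero_or_pos k with h | h
  · subst h; simp
  · have hk0 : (0 : ℝ) < k := by exact_mod_cast h
    have h1 : Real.log (((k : ℝ) + 1) / k) ≤ ((k : ℝ) + 1) / k - 1 :=
      Real.log_le_sub_one_of_pos (by positivity)
    have h2 : Real.log (((k : ℝ) + 1) / k) = Real.log ((k : ℝ) + 1) - Real.log k :=
      Real.log_div (by positivity) (ne_of_gt hk0)
    have h3 : ((k : ℝ) + 1) / k - 1 = 1 / k := by field_simp; ring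
    have h4 : Real.log ((k : ℝ) + 1) - Real.log k ≤ 1 / k := by rw [← h2, ← h3]; exact h1
    have h5 : (k : ℝ) * (Real.log ((k : ℝ) + 1) - Real.log k) ≤ (k : ℝ) * (1 / k) :=
      mul_le_mul_of_nonneg_left h4 (le_of_lt hk0)
    have h6 : (k : ℝ) * (1 / k) = 1 := by field_simp
    nlinarith [h5]

lemma stepB (a : ℕ) : ∀ n, a ≤ n → fAux n - fAux a ≤ ∑ k ∈ Finset.Ioc a n, Real.log k := by
  intro n
  induction n with
  | zero => intro h; interval_cases a; simp
  | succ m ih =>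
    intro h
    rcases Nat.lt_or_ge a (m + 1) with h' | h'
    · have ham : a ≤ m := Nat.lt_succ_iff.mp h'
      rw [Finset.sum_Ioc_succ_top ham]
      have hA := stepA m
      have hB := ih ham
      have : ((m + 1 : ℕ) : ℝ) = (m : ℝ) + 1 := by push_cast; ring
      rw [this]
      linarith
    · have : a = m + 1 := le_antisymm h h'
      subst this; simp

lemma factIoc (a : ℕ) : ∀ n, a ≤ n →
    Nat.factorial a * ∏ k ∈ Finset.Ioc a n, k = Nat.factorial n := by
  intro n
  induction n with
  | zero => intro h; interval_cases a; simp
  | succ m ih =>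
    intro h
    rcases Nat.lt_or_ge a (m + 1) with h' | h'
    · have ham : a ≤ m := Nat.lt_succ_iff.mp h'
      rw [Finset.prod_Ioc_succ_top ham, ← mul_assoc, ih ham, Nat.factorial_succ, mul_comm]
    · have : a = m + 1 := le_antisymm h h'
      subst this; simp

/-- For integers `1 ≤ j < s`: `s!/(s − j)! > exp(j·ln s − j²/s − 1)`. -/
theorem statement7 (s j : ℕ) (hj : 1 ≤ j) (hjs : j < s) :
    Real.exp ((j : ℝ) * Real.log (s : ℝ) - (j : ℝ) ^ 2 / (s : ℝ) - 1) <
      (Nat.factorial s : ℝ) / (Nat.factorial (s - j) : ℝ) := by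
  set a := s - j with ha
  have has : a ≤ s := Nat.sub_le s j
  have haj : a + j = s := Nat.sub_add_cancel (le_of_lt hjs)
  have ha1 : 1 ≤ a := by omega
  have ha0 : (0 : ℝ) < a := by exact_mod_cast ha1
  have hs0 : (0 : ℝ) < s := by exact_mod_cast (by omega : 0 < s)
  have hfact : (Nat.factorial s : ℝ) / (Nat.factorial a : ℝ)
      = ∏ k ∈ Finset.Ioc a s, (k : ℝ) := by
    have := factIoc a s has
    have hcast : (Nat.factorial a : ℝ) * ∏ k ∈ Finset.Ioc a s, (k : ℝ)
        = (Nat.factorial s : ℝ) := by push_cast [← this]; ring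
    have hfa : (Nat.factorial a : ℝ) ≠ 0 := by
      exact_mod_cast Nat.factorial_ne_zero a
    field_simp [hfa] at hcast ⊢
    linarith [hcast]
  rw [hfact]
  have hprod : ∏ k ∈ Finset.Ioc a s, (k : ℝ)
      = Real.exp (∑ k ∈ Finset.Ioc a s, Real.log k) := by
    rw [Real.exp_sum]
    apply Finset.prod_congr rfl
    intro k hk
    have hk1 : a < k := (Finset.mem_Ioc.mp hk).1
    have hk0 : (0 : ℝ) < k := by
      have : 1 ≤ k := by omega
      exact_mod_cast this
    rw [Real.exp_log hk0]
  rw [hprod]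
  apply Real.exp_lt_exp.mpr
  -- log inequality: log a ≤ log s - j/s
  have hlog : Real.log a ≤ Real.log s - (j : ℝ) / s := by
    have h1 : Real.log ((a : ℝ) / s) ≤ (a : ℝ) / s - 1 :=
      Real.log_le_sub_one_of_pos (by positivity)
    have h2 : Real.log ((a : ℝ) / s) = Real.log a - Real.log s :=
      Real.log_div (ne_of_gt ha0) (ne_of_gt hs0)
    have h3 : (a : ℝ) / s - 1 = -((j : ℝ) / s) := by
      have : (a : ℝ) + j = s := by exact_mod_cast haj
      field_simp
      linarith
    rw [h2, h3] at h1
    linarith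
  have hB := stepB a s has
  have hfs : fAux s - fAux a = (s : ℝ) * Real.log s - (a : ℝ) * Real.log a - (j : ℝ) := by
    unfold fAux
    have : (a : ℝ) + j = s := by exact_mod_cast haj
    linarith
  have hcast : (a : ℝ) + j = s := by exact_mod_cast haj
  have key : (j : ℝ) * Real.log s - (j : ℝ) ^ 2 / s - 1 < fAux s - fAux a := by
    rw [hfs]
    have hmul : (a : ℝ) * Real.log a ≤ (a : ℝ) * (Real.log s - (j : ℝ) / s) :=
      mul_le_mul_of_nonneg_left hlog (le_of_lt ha0)
    have hjs' : (a : ℝ) * ((j : ℝ) / s) = (j : ℝ) - (j : ℝ) ^ 2 / s := by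
      field_simp
      nlinarith [hcast]
    have h7 : ((a : ℝ) + j) * Real.log s = (s : ℝ) * Real.log s := by rw [hcast]
    nlinarith [hmul, hjs', h7]
  linarith [key, hB]
end

section
/- Let δ = √10 − 3, let k and s be positive integers, and let x = k/(1 + δ) and Φ₁(s) = (√10 − 2)²·(k/(√10 − 2))^s·s!. Let B₁, …, B_r be pairwise disjoint finite sets with r a positive integer satisfying r < (1 + δ)·x, let B = B₁ ∪ ⋯ ∪ B_r, and let F be a finite family of finite sets with |F| ≥ Φ₁(s) such that the number of U ∈ F with |U ∩ B| = 1 is strictly greater than (1 − δ)·|F|. Then there exists an index i such that the number of U ∈ F with |U ∩ B_i| = 1 and U ∩ (B − B_i) = ∅ is at least ((1 − δ)/(1 + δ))·Φ₁(s)/x. -/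
/-- Among pairwise disjoint sets `B₁, …, B_r` with `r < (1 + δ)·x`, if more than
`(1 − δ)·|F|` members of `F` meet `B = B₁ ∪ ⋯ ∪ B_r` in exactly one element and
`|F| ≥ Φ₁(s)`, then some `Bᵢ` satisfies
`|F₁(Bᵢ) − F(B − Bᵢ)| ≥ ((1 − δ)/(1 + δ))·Φ₁(s)/x`. -/
theorem statement9 (α : Type*) [DecidableEq α] (δ x Φ₁ : ℝ)
    (hδ : δ = Real.sqrt 10 - 3) (k s : ℕ) (hk : 0 < k) (hs : 0 < s)
    (hx : x = (k : ℝ) / (1 + δ))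
    (hΦ : Φ₁ = (Real.sqrt 10 - 2) ^ 2 * ((k : ℝ) / (Real.sqrt 10 - 2)) ^ s *
      (Nat.factorial s : ℝ))
    (r : ℕ) (hr : 0 < r) (hrx : (r : ℝ) < (1 + δ) * x)
    (B : Fin r → Finset α) (hdisj : ∀ i j : Fin r, i ≠ j → Disjoint (B i) (B j))
    (F : Finset (Finset α)) (hF : Φ₁ ≤ (F.card : ℝ))
    (h1 : (1 - δ) * (F.card : ℝ) <
      ((F.filter fun U => (U ∩ Finset.univ.biUnion B).card = 1).card : ℝ)) :
    ∃ i : Fin r,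
      (1 - δ) / (1 + δ) * (Φ₁ / x) ≤
        ((F.filter fun U =>
            (U ∩ B i).card = 1 ∧ U ∩ (Finset.univ.biUnion B \ B i) = ∅).card : ℝ) := by
  have hsq : (Real.sqrt 10) ^ 2 = 10 := Real.sq_sqrt (by norm_num)
  have hsnn : (0:ℝ) ≤ Real.sqrt 10 := Real.sqrt_nonneg 10
  have h3 : (3:ℝ) < Real.sqrt 10 := by nlinarith
  have h4 : Real.sqrt 10 < 4 := by nlinarith
  have hδ1 : (0:ℝ) < 1 + δ := by rw [hδ]; linarith
  have hδ2 : (0:ℝ) < 1 - δ := by rw [hδ]; linarith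
  have hk0 : (0:ℝ) < (k:ℝ) := by exact_mod_cast hk
  have hx0 : (0:ℝ) < x := by rw [hx]; positivity
  have hΦ0 : (0:ℝ) < Φ₁ := by
    have h2 : (0:ℝ) < Real.sqrt 10 - 2 := by linarith
    rw [hΦ]
    have : (0:ℝ) < (Nat.factorial s : ℝ) := by
      exact_mod_cast Nat.factorial_pos s
    positivity
  set BB := Finset.univ.biUnion B with hBB
  by_contra hcon
  push_neg at hcon
  -- subset of union
  have hsub : (F.filter fun U => (U ∩ BB).card = 1) ⊆
      Finset.univ.biUnion (fun i => F.filter fun U =>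
        (U ∩ B i).card = 1 ∧ U ∩ (BB \ B i) = ∅) := by
    intro U hU
    rw [Finset.mem_filter] at hU
    obtain ⟨hUF, hc⟩ := hU
    obtain ⟨a, ha⟩ := Finset.card_eq_one.mp hc
    have haU : a ∈ U := by
      have : a ∈ U ∩ BB := ha ▸ Finset.mem_singleton_self a
      exact Finset.mem_of_mem_inter_left this
    have haBB : a ∈ BB := by
      have : a ∈ U ∩ BB := ha ▸ Finset.mem_singleton_self a
      exact Finset.mem_of_mem_inter_right this
    obtain ⟨i, _, hai⟩ := Finset.mem_biUnion.mp haBB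
    refine Finset.mem_biUnion.mpr ⟨i, Finset.mem_univ i, ?_⟩
    rw [Finset.mem_filter]
    refine ⟨hUF, ?_, ?_⟩
    · have heq : U ∩ B i = {a} := by
        apply Finset.Subset.antisymm
        · intro b hb
          have : b ∈ U ∩ BB := by
            rw [Finset.mem_inter] at hb ⊢
            exact ⟨hb.1, Finset.mem_biUnion.mpr ⟨i, Finset.mem_univ i, hb.2⟩⟩
          rwa [ha] at this
        · intro b hb
          rw [Finset.mem_singleton] at hb
          subst hb
          exact Finset.mem_inter.mpr ⟨haU, hai⟩
      rw [heq, Finset.card_singleton]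
    · ext b
      simp only [Finset.mem_inter, Finset.mem_sdiff, Finset.notMem_empty, iff_false]
      rintro ⟨hbU, hbBB, hbi⟩
      have : b ∈ U ∩ BB := Finset.mem_inter.mpr ⟨hbU, hbBB⟩
      rw [ha, Finset.mem_singleton] at this
      subst this
      exact hbi hai
  have hcard := Finset.card_le_card hsub
  have hbu := Finset.card_biUnion_le (s := (Finset.univ : Finset (Fin r)))
    (t := fun i => F.filter fun U => (U ∩ B i).card = 1 ∧ U ∩ (BB \ B i) = ∅)
  have hsum : ((F.filter fun U => (U ∩ BB).card = 1).card : ℝ) ≤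
      ∑ i : Fin r, ((F.filter fun U =>
        (U ∩ B i).card = 1 ∧ U ∩ (BB \ B i) = ∅).card : ℝ) := by
    push_cast
    exact_mod_cast le_trans hcard hbu
  set b : ℝ := (1 - δ) / (1 + δ) * (Φ₁ / x) with hb
  have hb0 : 0 < b := by rw [hb]; positivity
  have hne : (Finset.univ : Finset (Fin r)).Nonempty := Finset.univ_nonempty_iff.mpr
    (Fin.pos_iff_nonempty.mp hr)
  have hsum2 : ∑ i : Fin r, ((F.filter fun U =>
        (U ∩ B i).card = 1 ∧ U ∩ (BB \ B i) = ∅).card : ℝ) < ∑ _i : Fin r, b :=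
    Finset.sum_lt_sum_of_nonempty hne (fun i _ => hcon i)
  rw [Finset.sum_const, Finset.card_univ, Fintype.card_fin, nsmul_eq_mul] at hsum2
  have hrb : (r:ℝ) * b < (1 + δ) * x * b := by
    exact mul_lt_mul_of_pos_right hrx hb0
  have heq : (1 + δ) * x * b = (1 - δ) * Φ₁ := by
    rw [hb]
    field_simp
  have hlast : (1 - δ) * Φ₁ ≤ (1 - δ) * (F.card : ℝ) :=
    mul_le_mul_of_nonneg_left hF (le_of_lt hδ2)
  linarith
end

section
/- Let δ = √10 − 3, let k be a positive integer and s an integer with s ≥ 3, and let x = k/(1 + δ) and Φ₁(s) = (√10 − 2)²·(k/(√10 − 2))^s·s!. Let F be a finite family of finite sets, each of cardinality at most s, such that for every nonempty finite set S with |S| < s, the number of U ∈ F with S ⊆ U is strictly less than Φ₁(s − |S|). Let B₁ and B₁′ be finite sets, each of cardinality at most s, with |B₁ ∩ B₁′| = 1. Then |F(B₁) ∩ F(B₁′)| < (Φ₁(s)/x)·(1/s + 1/x). -/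
/-- If for every nonempty set `S` with `|S| < s` fewer than `Φ₁(s − |S|)` members
of `F` contain `S`, and `B₁`, `B₁′` are sets of cardinality at most `s` with
`|B₁ ∩ B₁′| = 1`, then `|F(B₁) ∩ F(B₁′)| < (Φ₁(s)/x)·(1/s + 1/x)`. -/
theorem statement10 (α : Type*) [DecidableEq α] (δ x : ℝ) (Φ₁ : ℕ → ℝ)
    (hδ : δ = Real.sqrt 10 - 3) (k : ℕ) (hk : 0 < k) (s : ℕ) (hs : 3 ≤ s)
    (hx : x = (k : ℝ) / (1 + δ))
    (hΦ : ∀ n : ℕ, Φ₁ n = (Real.sqrt 10 - 2) ^ 2 * ((k : ℝ) / (Real.sqrt 10 - 2)) ^ n *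
      (Nat.factorial n : ℝ))
    (F : Finset (Finset α)) (hcard : ∀ U ∈ F, U.card ≤ s)
    (hsup : ∀ S : Finset α, S.Nonempty → S.card < s →
      ((F.filter fun U => S ⊆ U).card : ℝ) < Φ₁ (s - S.card))
    (B₁ B₁' : Finset α) (hB₁ : B₁.card ≤ s) (hB₁' : B₁'.card ≤ s)
    (hint : (B₁ ∩ B₁').card = 1) :
    ((F.filter fun U => (U ∩ B₁).Nonempty ∧ (U ∩ B₁').Nonempty).card : ℝ) <
      Φ₁ s / x * (1 / (s : ℝ) + 1 / x) := by
  obtain ⟨a, ha⟩ := Finset.card_eq_one.mp hint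
  obtain ⟨m, rfl⟩ : ∃ m, s = m + 2 := ⟨s - 2, by omega⟩
  -- basic positivity
  have h10 : (Real.sqrt 10) ^ 2 = 10 := Real.sq_sqrt (by norm_num)
  have hs10 : 3 < Real.sqrt 10 := by
    nlinarith [Real.sqrt_nonneg 10]
  have hr : (0:ℝ) < Real.sqrt 10 - 2 := by linarith
  set r : ℝ := Real.sqrt 10 - 2 with hrdef
  have hxr : x = (k : ℝ) / r := by rw [hx, hδ, hrdef]; ring_nf
  have hK : (0:ℝ) < (k : ℝ) := by exact_mod_cast hk
  have hx0 : (0:ℝ) < x := by rw [hxr]; positivity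
  have hΦpos : ∀ n : ℕ, 0 < Φ₁ n := by
    intro n
    rw [hΦ]
    positivity
  set G := F.filter fun U => (U ∩ B₁).Nonempty ∧ (U ∩ B₁').Nonempty with hG
  -- split G according to whether a ∈ U
  have hsplit : (G.filter fun U => a ∈ U).card + (G.filter fun U => ¬ a ∈ U).card
      = G.card := Finset.card_filter_add_card_filter_not _
  -- bound the part containing a
  have hA : ((G.filter fun U => a ∈ U).card : ℝ) < Φ₁ (m + 1) := by
    have hsub : (G.filter fun U => a ∈ U) ⊆ F.filter fun U => {a} ⊆ U := by
      intro U hU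
      simp only [hG, Finset.mem_filter] at hU ⊢
      exact ⟨hU.1.1, by simpa using hU.2⟩
    have := hsup {a} ⟨a, Finset.mem_singleton_self a⟩ (by simp)
    simp only [Finset.card_singleton] at this
    calc ((G.filter fun U => a ∈ U).card : ℝ)
        ≤ ((F.filter fun U => {a} ⊆ U).card : ℝ) := by
          exact_mod_cast Finset.card_le_card hsub
      _ < Φ₁ (m + 2 - 1) := this
      _ = Φ₁ (m + 1) := by norm_num
  -- bound the part avoiding a
  have hB : ((G.filter fun U => ¬ a ∈ U).card : ℝ)
      ≤ ((m + 1 : ℝ)) * ((m + 1 : ℝ)) * Φ₁ m := by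
    have hsub : (G.filter fun U => ¬ a ∈ U) ⊆
        ((B₁.erase a) ×ˢ (B₁'.erase a)).biUnion
          (fun p => F.filter fun U => {p.1, p.2} ⊆ U) := by
      intro U hU
      simp only [hG, Finset.mem_filter] at hU
      obtain ⟨⟨hUF, ⟨b, hb⟩, ⟨c, hc⟩⟩, haU⟩ := hU
      rw [Finset.mem_inter] at hb hc
      refine Finset.mem_biUnion.mpr ⟨(b, c), ?_, ?_⟩
      · refine Finset.mem_product.mpr ⟨?_, ?_⟩
        · exact Finset.mem_erase.mpr ⟨fun h => haU (h ▸ hb.1), hb.2⟩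
        · exact Finset.mem_erase.mpr ⟨fun h => haU (h ▸ hc.1), hc.2⟩
      · refine Finset.mem_filter.mpr ⟨hUF, ?_⟩
        intro y hy
        rcases Finset.mem_insert.mp hy with h | h
        · exact h ▸ hb.1
        · exact (Finset.mem_singleton.mp h) ▸ hc.1
    have hterm : ∀ p ∈ (B₁.erase a) ×ˢ (B₁'.erase a),
        ((F.filter fun U => {p.1, p.2} ⊆ U).card : ℝ) ≤ Φ₁ m := by
      rintro ⟨b, c⟩ hp
      rw [Finset.mem_product] at hp
      obtain ⟨hb, hc⟩ := hp
      rw [Finset.mem_erase] at hb hc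
      have hbc : b ≠ c := by
        intro h
        have : b ∈ B₁ ∩ B₁' := Finset.mem_inter.mpr ⟨hb.2, h ▸ hc.2⟩
        rw [ha, Finset.mem_singleton] at this
        exact hb.1 this
      have hcard2 : ({b, c} : Finset α).card = 2 := Finset.card_pair hbc
      have := hsup {b, c} ⟨b, by simp⟩ (by omega)
      rw [hcard2] at this
      have h2 : m + 2 - 2 = m := by omega
      rw [h2] at this
      exact le_of_lt this
    calc ((G.filter fun U => ¬ a ∈ U).card : ℝ)
        ≤ ((((B₁.erase a) ×ˢ (B₁'.erase a)).biUnion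
            (fun p => F.filter fun U => {p.1, p.2} ⊆ U)).card : ℝ) := by
          exact_mod_cast Finset.card_le_card hsub
      _ ≤ ∑ p ∈ (B₁.erase a) ×ˢ (B₁'.erase a),
            ((F.filter fun U => {p.1, p.2} ⊆ U).card : ℝ) := by
          exact_mod_cast Finset.card_biUnion_le
      _ ≤ ∑ _p ∈ (B₁.erase a) ×ˢ (B₁'.erase a), Φ₁ m := Finset.sum_le_sum hterm
      _ = (((B₁.erase a) ×ˢ (B₁'.erase a)).card : ℝ) * Φ₁ m := by
          rw [Finset.sum_const, nsmul_eq_mul]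
      _ ≤ ((m + 1 : ℝ)) * ((m + 1 : ℝ)) * Φ₁ m := by
          have haB : a ∈ B₁ ∩ B₁' := by rw [ha]; exact Finset.mem_singleton_self a
          rw [Finset.mem_inter] at haB
          have h1 : (B₁.erase a).card ≤ m + 1 := by
            rw [Finset.card_erase_of_mem haB.1]; omega
          have h2 : (B₁'.erase a).card ≤ m + 1 := by
            rw [Finset.card_erase_of_mem haB.2]; omega
          have hc : (((B₁.erase a) ×ˢ (B₁'.erase a)).card : ℝ)
              ≤ (m + 1 : ℝ) * (m + 1 : ℝ) := by
            rw [Finset.card_product]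
            have : (B₁.erase a).card * (B₁'.erase a).card ≤ (m+1) * (m+1) :=
              Nat.mul_le_mul h1 h2
            push_cast
            calc ((B₁.erase a).card : ℝ) * ((B₁'.erase a).card : ℝ)
                ≤ (((m+1) * (m+1) : ℕ) : ℝ) := by exact_mod_cast this
              _ = (m + 1 : ℝ) * (m + 1 : ℝ) := by push_cast; ring
          exact mul_le_mul_of_nonneg_right hc (le_of_lt (hΦpos m))
  -- the key algebraic identity for the RHS
  have hkey : Φ₁ (m + 2) / x * (1 / ((m + 2 : ℕ) : ℝ) + 1 / x)
      = Φ₁ (m + 1) + ((m + 2 : ℝ) * (m + 1 : ℝ)) * Φ₁ m := by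
    rw [hΦ, hΦ, hΦ, ← hxr]
    have hm2 : ((m + 2 : ℕ) : ℝ) ≠ 0 := by positivity
    have hxne : x ≠ 0 := ne_of_gt hx0
    rw [Nat.factorial_succ (m + 1), Nat.factorial_succ m]
    push_cast
    field_simp
    ring
  have hGcard : (G.card : ℝ) < Φ₁ (m + 1) + ((m + 2 : ℝ) * (m + 1 : ℝ)) * Φ₁ m := by
    have : (G.card : ℝ) = ((G.filter fun U => a ∈ U).card : ℝ)
        + ((G.filter fun U => ¬ a ∈ U).card : ℝ) := by
      exact_mod_cast hsplit.symm
    rw [this]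
    have hΦm := hΦpos m
    nlinarith [hA, hB]
  calc ((F.filter fun U => (U ∩ B₁).Nonempty ∧ (U ∩ B₁').Nonempty).card : ℝ)
      = (G.card : ℝ) := by rw [hG]
    _ < Φ₁ (m + 1) + ((m + 2 : ℝ) * (m + 1 : ℝ)) * Φ₁ m := hGcard
    _ = Φ₁ (m + 2) / x * (1 / ((m + 2 : ℕ) : ℝ) + 1 / x) := hkey.symm
end

section
/- Let B₁, …, B_r be pairwise disjoint nonempty finite sets (r a positive integer), let B = B₁ ∪ ⋯ ∪ B_r, let F be a finite family of finite sets, let j be a positive integer with j ≤ r and 2j ≤ r − j + 1, and let M > 0 be a real number with |F_j(B)| ≥ M. For each nonempty subfamily B′ of {B₁, …, B_r} define G(B′) = {U ∈ F_j(B) : U ∩ S ≠ ∅ for every S ∈ B′ and U ∩ S′ = ∅ for every S′ ∈ {B₁, …, B_r} − B′}. Then there exists a nonempty subfamily B′ of {B₁, …, B_r} with |B′| ≤ j and |G(B′)| ≥ M/(2·C(r, j)), where C(r, j) is the binomial coefficient r choose j. -/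
open Finset

lemma sum_choose_le_aux (r : ℕ) (J : ℕ) (h1 : 1 ≤ J) (h3 : 3 * J ≤ r + 1) :
    ∑ k ∈ Icc 1 J, Nat.choose r k ≤ 2 * Nat.choose r J := by
  induction J with
  | zero => omega
  | succ J ih =>
    rcases Nat.lt_or_ge 1 (J + 1) with h | h
    · have hJ1 : 1 ≤ J := by omega
      have key : 2 * Nat.choose r J ≤ Nat.choose r (J + 1) := by
        have h2 : Nat.choose r (J + 1) * (J + 1) = Nat.choose r J * (r - J) :=
          Nat.choose_succ_right_eq r J
        have hmul : 2 * Nat.choose r J * (J + 1) ≤ Nat.choose r (J + 1) * (J + 1) := by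
          rw [h2]
          have : 2 * (J + 1) ≤ r - J := by omega
          calc 2 * Nat.choose r J * (J + 1) = Nat.choose r J * (2 * (J + 1)) := by ring
            _ ≤ Nat.choose r J * (r - J) := Nat.mul_le_mul_left _ this
        exact Nat.le_of_mul_le_mul_right hmul (by omega)
      have ihh := ih hJ1 (by omega)
      rw [Finset.sum_Icc_succ_top (by omega : 1 ≤ J + 1)]
      omega
    · have : J = 0 := by omega
      subst this
      simp
      omega

/-- If `B₁, …, B_r` are pairwise disjoint nonempty sets with union `B`,
`j ≤ r`, `2j ≤ r − j + 1`, and `|F_j(B)| ≥ M > 0`, then there is a nonempty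
subfamily `B′` of `{B₁, …, B_r}` with `|B′| ≤ j` and `|G(B′)| ≥ M/(2·C(r, j))`,
where `G(B′)` consists of the `U ∈ F_j(B)` meeting every member of `B′` and no
member of `{B₁, …, B_r} − B′`. -/
theorem statement12 (α : Type*) [DecidableEq α] (r j : ℕ) (hr : 0 < r) (hj : 0 < j)
    (B : Fin r → Finset α) (hne : ∀ i, (B i).Nonempty)
    (hdisj : ∀ i i' : Fin r, i ≠ i' → Disjoint (B i) (B i'))
    (F : Finset (Finset α)) (hjr : j ≤ r) (h2j : 2 * j ≤ r - j + 1)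
    (M : ℝ) (hM : 0 < M)
    (hFj : M ≤ ((F.filter fun U => (U ∩ Finset.univ.biUnion B).card = j).card : ℝ)) :
    ∃ T : Finset (Fin r), T.Nonempty ∧ T.card ≤ j ∧
      M / (2 * (r.choose j : ℝ)) ≤
        ((F.filter fun U => (U ∩ Finset.univ.biUnion B).card = j ∧
            (∀ i ∈ T, (U ∩ B i).Nonempty) ∧ ∀ i ∉ T, U ∩ B i = ∅).card : ℝ) := by
  classical
  set Fj := F.filter (fun U => (U ∩ Finset.univ.biUnion B).card = j) with hFjdef
  set f : Finset α → Finset (Fin r) :=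
    fun U => Finset.univ.filter (fun i => (U ∩ B i).Nonempty) with hf
  -- sum of intersection cards
  have hsum : ∀ U ∈ Fj, ∑ i : Fin r, (U ∩ B i).card = j := by
    intro U hU
    have hU' := (mem_filter.mp hU).2
    have h1 : U ∩ Finset.univ.biUnion B = Finset.univ.biUnion (fun i => U ∩ B i) := by
      ext x; simp [and_comm]
    have h2 : (Finset.univ.biUnion (fun i => U ∩ B i)).card
        = ∑ i : Fin r, (U ∩ B i).card := by
      apply Finset.card_biUnion
      intro i _ i' _ hii'
      exact (hdisj i i' hii').mono inter_subset_right inter_subset_right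
    rw [h1, h2] at hU'
    exact hU'
  have hcard : ∀ U ∈ Fj, (f U).card ≤ j := by
    intro U hU
    calc (f U).card = ∑ i ∈ f U, 1 := by rw [Finset.card_eq_sum_ones]
      _ ≤ ∑ i ∈ f U, (U ∩ B i).card := by
          apply Finset.sum_le_sum
          intro i hi
          have : (U ∩ B i).Nonempty := (mem_filter.mp hi).2
          exact Finset.card_pos.mpr this
      _ ≤ ∑ i : Fin r, (U ∩ B i).card :=
          Finset.sum_le_sum_of_subset (subset_univ _)
      _ = j := hsum U hU
  have hnonem : ∀ U ∈ Fj, (f U).Nonempty := by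
    intro U hU
    by_contra hcon
    rw [Finset.not_nonempty_iff_eq_empty] at hcon
    have hz : ∀ i : Fin r, (U ∩ B i).card = 0 := by
      intro i
      by_contra hc
      have hi : i ∈ f U :=
        mem_filter.mpr ⟨mem_univ i, Finset.card_ne_zero.mp hc⟩
      simp [hcon] at hi
    have hs := hsum U hU
    rw [Finset.sum_eq_zero (fun i _ => hz i)] at hs
    omega
  set S : Finset (Finset (Fin r)) :=
    Finset.univ.filter (fun T => T.Nonempty ∧ T.card ≤ j) with hS
  have hmaps : ∀ U ∈ Fj, f U ∈ S := fun U hU =>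
    mem_filter.mpr ⟨mem_univ _, hnonem U hU, hcard U hU⟩
  have hfib : ∀ T : Finset (Fin r), Fj.filter (fun U => f U = T)
      = F.filter (fun U => (U ∩ Finset.univ.biUnion B).card = j ∧
          (∀ i ∈ T, (U ∩ B i).Nonempty) ∧ ∀ i ∉ T, U ∩ B i = ∅) := by
    intro T
    rw [hFjdef, Finset.filter_filter]
    apply Finset.filter_congr
    intro U _
    simp only [hf]
    constructor
    · rintro ⟨h1, h2⟩
      refine ⟨h1, ?_, ?_⟩
      · intro i hi
        rw [← h2] at hi
        exact (mem_filter.mp hi).2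
      · intro i hi
        rw [← h2] at hi
        simp only [mem_filter, mem_univ, true_and] at hi
        exact Finset.not_nonempty_iff_eq_empty.mp hi
    · rintro ⟨h1, h2, h3⟩
      refine ⟨h1, ?_⟩
      ext i
      simp only [mem_filter, mem_univ, true_and]
      constructor
      · intro hne'
        by_contra hi
        rw [h3 i hi] at hne'
        exact Finset.not_nonempty_empty hne'
      · exact h2 i
  -- bound on |S|
  have hScard : S.card ≤ 2 * r.choose j := by
    have hsub : S ⊆ (Icc 1 j).biUnion (fun k => Finset.powersetCard k Finset.univ) := by
      intro T hT
      obtain ⟨-, hTne, hTc⟩ := mem_filter.mp hT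
      refine Finset.mem_biUnion.mpr ⟨T.card, ?_, ?_⟩
      · exact Finset.mem_Icc.mpr ⟨Finset.card_pos.mpr hTne, hTc⟩
      · exact Finset.mem_powersetCard.mpr ⟨subset_univ _, rfl⟩
    calc S.card ≤ ((Icc 1 j).biUnion (fun k => Finset.powersetCard k Finset.univ)).card :=
          Finset.card_le_card hsub
      _ ≤ ∑ k ∈ Icc 1 j, (Finset.powersetCard k (Finset.univ : Finset (Fin r))).card :=
          Finset.card_biUnion_le
      _ = ∑ k ∈ Icc 1 j, r.choose k := by
          apply Finset.sum_congr rfl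
          intro k _
          rw [Finset.card_powersetCard, Finset.card_univ, Fintype.card_fin]
      _ ≤ 2 * r.choose j := sum_choose_le_aux r j hj (by omega)
  have hchoosepos : 0 < (r.choose j : ℝ) := by
    exact_mod_cast Nat.choose_pos hjr
  have hc2 : (0:ℝ) < 2 * (r.choose j : ℝ) := by linarith
  by_contra hcon
  push_neg at hcon
  have hcount : Fj.card = ∑ T ∈ S, (Fj.filter (fun U => f U = T)).card :=
    Finset.card_eq_sum_card_fiberwise hmaps
  have hSne : S.Nonempty := by
    refine ⟨{⟨0, hr⟩}, mem_filter.mpr ⟨mem_univ _, Finset.singleton_nonempty _, ?_⟩⟩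
    simp only [card_singleton]; omega
  have hlt : (Fj.card : ℝ) < M := by
    rw [hcount]
    push_cast
    calc ∑ T ∈ S, ((Fj.filter (fun U => f U = T)).card : ℝ)
        < ∑ T ∈ S, M / (2 * (r.choose j : ℝ)) := by
          apply Finset.sum_lt_sum_of_nonempty hSne
          intro T hT
          obtain ⟨-, hTne, hTc⟩ := mem_filter.mp hT
          rw [hfib T]
          exact hcon T hTne hTc
      _ = S.card * (M / (2 * (r.choose j : ℝ))) := by
          rw [Finset.sum_const, nsmul_eq_mul]
      _ ≤ (2 * r.choose j : ℝ) * (M / (2 * (r.choose j : ℝ))) := by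
          apply mul_le_mul_of_nonneg_right
          · exact_mod_cast hScard
          · positivity
      _ = M := by field_simp
  exact absurd hFj (not_le.mpr hlt)
end

section
/- Let p ≥ 1 be a real number with 8p³·e^{−p} < 1/2, let y = e^{8p}, let s be an integer with s ≥ y, and let x be a real number with x ≥ y/p. Let j and r′ be positive integers with r′ ≤ j ≤ 2p and j < s. Let B′ be a set and let H be a finite family of sets such that every V ∈ H satisfies |V| ≤ s and |V ∩ B′| = j, and such that for every element v: if v ∈ B′ then the number of U ∈ H containing v is at most (e^{7p}/s)·|H|, and if v ∉ B′ then the number of U ∈ H containing v is at most (e^{7p}/((s − j)·x))·|H|. Then for every V ∈ H, r′ · |{U ∈ H : U ∩ V ≠ ∅}| ≤ |H|/2. -/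
set_option maxHeartbeats 1000000 in
/-- If each element of `B′` lies in at most `(e^{7p}/s)·|H|` members of `H` and
each element outside `B′` lies in at most `(e^{7p}/((s − j)·x))·|H|` members,
and every `V ∈ H` has `|V| ≤ s` and `|V ∩ B′| = j`, then every `V ∈ H` meets at
most `|H|/(2r′)` members of `H`, i.e. `r′·|H(V)| ≤ |H|/2`. -/
theorem statement16 (α : Type*) [DecidableEq α]
    (p : ℝ) (hp1 : 1 ≤ p) (hp3 : 8 * p ^ 3 * Real.exp (-p) < 1 / 2)
    (y : ℝ) (hy : y = Real.exp (8 * p))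
    (s : ℕ) (hsy : y ≤ (s : ℝ))
    (x : ℝ) (hx : y / p ≤ x)
    (j r' : ℕ) (hj : 0 < j) (hr' : 0 < r') (hr'j : r' ≤ j)
    (hj2p : (j : ℝ) ≤ 2 * p) (hjs : j < s)
    (B' : Finset α) (H : Finset (Finset α))
    (hmem : ∀ V ∈ H, V.card ≤ s ∧ (V ∩ B').card = j)
    (hin : ∀ v ∈ B', ((H.filter fun U => v ∈ U).card : ℝ) ≤
      Real.exp (7 * p) / (s : ℝ) * (H.card : ℝ))
    (hout : ∀ v ∉ B', ((H.filter fun U => v ∈ U).card : ℝ) ≤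
      Real.exp (7 * p) / (((s : ℝ) - (j : ℝ)) * x) * (H.card : ℝ)) :
    ∀ V ∈ H, (r' : ℝ) * ((H.filter fun U => (U ∩ V).Nonempty).card : ℝ) ≤
      (H.card : ℝ) / 2 := by
  intro V hV
  have hp0 : (0:ℝ) < p := lt_of_lt_of_le one_pos hp1
  have hy0 : (0:ℝ) < y := hy ▸ Real.exp_pos _
  have hs0 : (0:ℝ) < (s:ℝ) := lt_of_lt_of_le hy0 hsy
  have hx0 : (0:ℝ) < x := lt_of_lt_of_le (div_pos hy0 hp0) hx
  have hjsR : (j:ℝ) < (s:ℝ) := by exact_mod_cast hjs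
  have hE : Real.exp (7 * p) = y * Real.exp (-p) := by
    rw [hy, ← Real.exp_add]; ring_nf
  set E := Real.exp (7 * p) with hEdef
  have hE0 : 0 < E := Real.exp_pos _
  have hH0 : (0:ℝ) ≤ (H.card : ℝ) := by positivity
  -- card bound
  have hsub : H.filter (fun U => (U ∩ V).Nonempty) ⊆
      V.biUnion (fun v => H.filter (fun U => v ∈ U)) := by
    intro U hU
    simp only [Finset.mem_filter] at hU
    obtain ⟨w, hw⟩ := hU.2
    simp only [Finset.mem_inter] at hw
    exact Finset.mem_biUnion.mpr ⟨w, hw.2, Finset.mem_filter.mpr ⟨hU.1, hw.1⟩⟩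
  have hcard : ((H.filter fun U => (U ∩ V).Nonempty).card : ℝ) ≤
      ∑ v ∈ V, ((H.filter fun U => v ∈ U).card : ℝ) := by
    calc ((H.filter fun U => (U ∩ V).Nonempty).card : ℝ)
        ≤ ((V.biUnion fun v => H.filter fun U => v ∈ U).card : ℝ) := by
          exact_mod_cast Finset.card_le_card hsub
      _ ≤ _ := by exact_mod_cast Finset.card_biUnion_le
  obtain ⟨hVs, hVB⟩ := hmem V hV
  -- split the sum
  have hsplit : ∑ v ∈ V, ((H.filter fun U => v ∈ U).card : ℝ) =
      ∑ v ∈ V ∩ B', ((H.filter fun U => v ∈ U).card : ℝ) +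
      ∑ v ∈ V \ B', ((H.filter fun U => v ∈ U).card : ℝ) :=
    (Finset.sum_inter_add_sum_sdiff V B' _).symm
  have hA : ∑ v ∈ V ∩ B', ((H.filter fun U => v ∈ U).card : ℝ) ≤
      (j:ℝ) * (E / (s:ℝ) * (H.card:ℝ)) := by
    have := Finset.sum_le_card_nsmul (V ∩ B')
      (fun v => ((H.filter fun U => v ∈ U).card : ℝ)) (E / (s:ℝ) * (H.card:ℝ))
      (fun v hv => hin v (Finset.mem_inter.mp hv).2)
    rw [hVB] at this
    simpa [nsmul_eq_mul] using this
  have hsj0 : (0:ℝ) < (s:ℝ) - (j:ℝ) := sub_pos.mpr hjsR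
  have hne : ((s:ℝ) - (j:ℝ)) ≠ 0 := ne_of_gt hsj0
  have hxne : x ≠ 0 := ne_of_gt hx0
  have hcdiff : ((V \ B').card : ℝ) ≤ (s:ℝ) - (j:ℝ) := by
    have h1 : (V ∩ B').card + (V \ B').card = V.card := Finset.card_inter_add_card_sdiff V B'
    have h2 : (V \ B').card + j ≤ s := by omega
    have h3 : (((V \ B').card + j : ℕ) : ℝ) ≤ (s:ℝ) := by exact_mod_cast h2
    push_cast at h3
    linarith
  have hB : ∑ v ∈ V \ B', ((H.filter fun U => v ∈ U).card : ℝ) ≤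
      ((s:ℝ) - (j:ℝ)) * (E / (((s:ℝ) - (j:ℝ)) * x) * (H.card:ℝ)) := by
    have hb : ∀ v ∈ V \ B', ((H.filter fun U => v ∈ U).card : ℝ) ≤
        E / (((s:ℝ) - (j:ℝ)) * x) * (H.card:ℝ) :=
      fun v hv => hout v (Finset.mem_sdiff.mp hv).2
    have h1 := Finset.sum_le_card_nsmul (V \ B')
      (fun v => ((H.filter fun U => v ∈ U).card : ℝ)) _ hb
    rw [nsmul_eq_mul] at h1
    have hbnn : (0:ℝ) ≤ E / (((s:ℝ) - (j:ℝ)) * x) * (H.card:ℝ) := by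
      apply mul_nonneg _ hH0
      exact div_nonneg (le_of_lt hE0) (le_of_lt (mul_pos hsj0 hx0))
    calc _ ≤ ((V \ B').card : ℝ) * (E / (((s:ℝ) - (j:ℝ)) * x) * (H.card:ℝ)) := h1
      _ ≤ _ := by apply mul_le_mul_of_nonneg_right hcdiff hbnn
  have hBsimp : ((s:ℝ) - (j:ℝ)) * (E / (((s:ℝ) - (j:ℝ)) * x) * (H.card:ℝ)) =
      E / x * (H.card:ℝ) := by
    field_simp
  -- numeric estimates
  have hEs : E / (s:ℝ) ≤ Real.exp (-p) := by
    rw [hE, div_le_iff₀ hs0]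
    nlinarith [Real.exp_pos (-p)]
  have hEx : E / x ≤ p * Real.exp (-p) := by
    rw [hE, div_le_iff₀ hx0]
    rw [div_le_iff₀ hp0] at hx
    nlinarith [Real.exp_pos (-p)]
  have hjp : (0:ℝ) ≤ (j:ℝ) := by positivity
  have hr2p : (r':ℝ) ≤ 2 * p := by
    have : (r':ℝ) ≤ (j:ℝ) := by exact_mod_cast hr'j
    linarith
  have hF0 : (0:ℝ) ≤ ((H.filter fun U => (U ∩ V).Nonempty).card : ℝ) := by positivity
  have hF3 : ((H.filter fun U => (U ∩ V).Nonempty).card : ℝ) ≤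
      3 * p * Real.exp (-p) * (H.card:ℝ) := by
    have hEs0 : (0:ℝ) ≤ E / (s:ℝ) := by positivity
    have hjEs : (j:ℝ) * (E / (s:ℝ)) ≤ 2 * p * Real.exp (-p) := by
      calc (j:ℝ) * (E / (s:ℝ)) ≤ 2 * p * (E / (s:ℝ)) :=
            mul_le_mul_of_nonneg_right hj2p hEs0
        _ ≤ 2 * p * Real.exp (-p) := by
            apply mul_le_mul_of_nonneg_left hEs; positivity
    have := hcard
    rw [hsplit] at this
    have hcomb : ((H.filter fun U => (U ∩ V).Nonempty).card : ℝ) ≤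
        (j:ℝ) * (E / (s:ℝ) * (H.card:ℝ)) + E / x * (H.card:ℝ) := by
      rw [← hBsimp]; linarith
    have hExH : E / x * (H.card:ℝ) ≤ p * Real.exp (-p) * (H.card:ℝ) :=
      mul_le_mul_of_nonneg_right hEx hH0
    have hjEsH : (j:ℝ) * (E / (s:ℝ) * (H.card:ℝ)) ≤ 2 * p * Real.exp (-p) * (H.card:ℝ) := by
      rw [← mul_assoc]
      exact mul_le_mul_of_nonneg_right hjEs hH0
    linarith
  have hep : (0:ℝ) < Real.exp (-p) := Real.exp_pos _
  calc (r':ℝ) * ((H.filter fun U => (U ∩ V).Nonempty).card : ℝ)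
      ≤ 2 * p * ((H.filter fun U => (U ∩ V).Nonempty).card : ℝ) :=
        mul_le_mul_of_nonneg_right hr2p hF0
    _ ≤ 2 * p * (3 * p * Real.exp (-p) * (H.card:ℝ)) := by
        apply mul_le_mul_of_nonneg_left hF3 (by positivity)
    _ ≤ 8 * p ^ 3 * Real.exp (-p) * (H.card:ℝ) := by
        have h6 : 6 * p ^ 2 ≤ 8 * p ^ 3 := by nlinarith
        have h7 := mul_le_mul_of_nonneg_right
          (mul_le_mul_of_nonneg_right h6 hep.le) hH0
        nlinarith [h7]
    _ ≤ (H.card:ℝ) / 2 := by nlinarith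
end
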